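/- arXiv:math/0108029 — 4 statements merged into one kernel-verified Lean document; each statement's English description precedes it below -/
import Mathlib

section
/- Let μ be a positive Borel measure on ℝⁿ × (0,∞). Suppose there exist constants C > 0 and η ∈ (0,1) such that for every cube Q in ℝⁿ one can find countably many pairwise disjoint subcubes Q_i of Q with ∑ |Q_i| ≤ (1−η)|Q| and μ(R_Q \ ⋃ R_{Q_i}) ≤ C|Q|, where R_Q = Q × (0, ℓ(Q)] is the Carleson box over Q. Then μ is a Carleson measure with Carleson norm sup_Q μ(R_Q)/|Q| ≤ C/η. -/
open MeasureTheory Set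

/-- The axis-parallel closed cube in `ℝⁿ` with lower-left corner `a` and sidelength `l`. -/
def cube (n : ℕ) (a : Fin n → ℝ) (l : ℝ) : Set (Fin n → ℝ) :=
  {x | ∀ i, a i ≤ x i ∧ x i ≤ a i + l}

/-- The Carleson box `R_Q = Q × (0, ℓ(Q)]` over the cube `Q`. -/
def carlesonBox (n : ℕ) (a : Fin n → ℝ) (l : ℝ) : Set ((Fin n → ℝ) × ℝ) :=
  (cube n a l) ×ˢ Ioc (0 : ℝ) l

lemma cube_eq_pi (n : ℕ) (a : Fin n → ℝ) (l : ℝ) :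
    cube n a l = Set.pi univ fun i => Icc (a i) (a i + l) := by
  ext x
  simp only [cube, mem_setOf_eq, Set.mem_pi, mem_univ, forall_true_left, mem_Icc]

lemma volume_cube (n : ℕ) (a : Fin n → ℝ) (l : ℝ) (hl : 0 ≤ l) :
    volume (cube n a l) = ENNReal.ofReal (l ^ n) := by
  rw [cube_eq_pi, volume_pi_pi]
  simp only [Real.volume_Icc, add_sub_cancel_left]
  rw [Finset.prod_const, ← ENNReal.ofReal_pow hl, Finset.card_univ, Fintype.card_fin]

lemma measurableSet_cube (n : ℕ) (a : Fin n → ℝ) (l : ℝ) : MeasurableSet (cube n a l) := by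
  rw [cube_eq_pi]
  exact MeasurableSet.univ_pi fun i => measurableSet_Icc

lemma summable_of_disjoint_subcubes {n : ℕ} {a : Fin n → ℝ} {l : ℝ} (hl : 0 ≤ l)
    {c : ℕ → (Fin n → ℝ)} {s : ℕ → ℝ} (hs0 : ∀ i, 0 ≤ s i)
    (hsub : ∀ i, cube n (c i) (s i) ⊆ cube n a l)
    (hdisj : Pairwise fun i j => Disjoint (cube n (c i) (s i)) (cube n (c j) (s j))) :
    Summable fun i => s i ^ n := by
  apply summable_of_sum_range_le (c := l ^ n) (fun i => pow_nonneg (hs0 i) n)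
  intro N
  have key : ENNReal.ofReal (∑ i ∈ Finset.range N, s i ^ n) ≤ ENNReal.ofReal (l ^ n) := by
    rw [ENNReal.ofReal_sum_of_nonneg fun i _ => pow_nonneg (hs0 i) n]
    calc ∑ i ∈ Finset.range N, ENNReal.ofReal (s i ^ n)
        = ∑ i ∈ Finset.range N, volume (cube n (c i) (s i)) := by
          refine Finset.sum_congr rfl fun i _ => (volume_cube n (c i) (s i) (hs0 i)).symm
      _ = volume (⋃ i ∈ Finset.range N, cube n (c i) (s i)) := by
          refine (measure_biUnion_finset ?_ fun i _ => measurableSet_cube n (c i) (s i)).symm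
          exact fun i _ j _ hij => hdisj hij
      _ ≤ volume (cube n a l) := measure_mono (iUnion₂_subset fun i _ => hsub i)
      _ = ENNReal.ofReal (l ^ n) := volume_cube n a l hl
  exact (ENNReal.ofReal_le_ofReal_iff (pow_nonneg hl n)).1 key

lemma carleson_key (n : ℕ) (μ : Measure ((Fin n → ℝ) × ℝ))
    (C η : ℝ) (hC : 0 < C) (hη : η ∈ Ioo (0 : ℝ) 1)
    (h : ∀ (a : Fin n → ℝ) (l : ℝ), 0 < l →
      ∃ (c : ℕ → (Fin n → ℝ)) (s : ℕ → ℝ),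
        (∀ i, 0 ≤ s i) ∧
        (∀ i, cube n (c i) (s i) ⊆ cube n a l) ∧
        Pairwise (fun i j => Disjoint (cube n (c i) (s i)) (cube n (c j) (s j))) ∧
        (∑' i, (s i) ^ n) ≤ (1 - η) * l ^ n ∧
        μ (carlesonBox n a l \ ⋃ i, carlesonBox n (c i) (s i)) ≤ ENNReal.ofReal (C * l ^ n)) :
    ∀ (N : ℕ) (a : Fin n → ℝ) (l : ℝ), 0 ≤ l →
      μ (carlesonBox n a l ∩ {p | (1 - η) ^ N * l ^ n < p.2 ^ n}) ≤
        ENNReal.ofReal (C * (∑ k ∈ Finset.range N, (1 - η) ^ k) * l ^ n) := by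
  obtain ⟨hη0, hη1⟩ := hη
  have h1η0 : (0:ℝ) ≤ 1 - η := by linarith
  intro N
  induction N with
  | zero =>
    intro a l hl
    have he : carlesonBox n a l ∩ {p | (1 - η) ^ 0 * l ^ n < p.2 ^ n} = ∅ := by
      ext p
      simp only [carlesonBox, mem_inter_iff, mem_prod, mem_Ioc, mem_setOf_eq, pow_zero, one_mul,
        mem_empty_iff_false, iff_false, not_and, and_imp]
      intro _ hp0 hpl hlt
      exact absurd (pow_le_pow_left₀ hp0.le hpl n) (not_le.2 hlt)
    rw [he]
    simp
  | succ N ih =>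
    intro a l hl
    rcases eq_or_lt_of_le hl with rfl | hl'
    · simp [carlesonBox]
    obtain ⟨c, s, hs0, hsub, hdisj, hsum, hrest⟩ := h a l hl'
    have hsummable := summable_of_disjoint_subcubes hl hs0 hsub hdisj
    have hsle : ∀ i, s i ^ n ≤ (1 - η) * l ^ n := fun i =>
      (hsummable.le_tsum i fun j _ => pow_nonneg (hs0 j) n).trans hsum
    set A := carlesonBox n a l \ ⋃ i, carlesonBox n (c i) (s i) with hA
    have hincl : carlesonBox n a l ∩ {p | (1 - η) ^ (N + 1) * l ^ n < p.2 ^ n} ⊆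
        A ∪ ⋃ i, (carlesonBox n (c i) (s i) ∩ {p | (1 - η) ^ N * (s i) ^ n < p.2 ^ n}) := by
      rintro p ⟨hpB, hpt⟩
      by_cases hmem : p ∈ ⋃ i, carlesonBox n (c i) (s i)
      · right
        obtain ⟨_, ⟨i, rfl⟩, hpi⟩ := hmem
        refine mem_iUnion.2 ⟨i, hpi, ?_⟩
        have : (1 - η) ^ N * s i ^ n ≤ (1 - η) ^ (N + 1) * l ^ n := by
          calc (1 - η) ^ N * s i ^ n ≤ (1 - η) ^ N * ((1 - η) * l ^ n) :=
                mul_le_mul_of_nonneg_left (hsle i) (pow_nonneg h1η0 N)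
            _ = (1 - η) ^ (N + 1) * l ^ n := by ring
        exact lt_of_le_of_lt this hpt
      · exact Or.inl ⟨hpB, hmem⟩
    calc μ (carlesonBox n a l ∩ {p | (1 - η) ^ (N + 1) * l ^ n < p.2 ^ n})
        ≤ μ (A ∪ ⋃ i, (carlesonBox n (c i) (s i) ∩ {p | (1 - η) ^ N * (s i) ^ n < p.2 ^ n})) :=
          measure_mono hincl
      _ ≤ μ A + μ (⋃ i, (carlesonBox n (c i) (s i) ∩ {p | (1 - η) ^ N * (s i) ^ n < p.2 ^ n})) :=
          measure_union_le _ _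
      _ ≤ ENNReal.ofReal (C * l ^ n) +
          ∑' i, μ (carlesonBox n (c i) (s i) ∩ {p | (1 - η) ^ N * (s i) ^ n < p.2 ^ n}) := by
          exact add_le_add hrest (measure_iUnion_le _)
      _ ≤ ENNReal.ofReal (C * l ^ n) +
          ∑' i, ENNReal.ofReal (C * (∑ k ∈ Finset.range N, (1 - η) ^ k) * s i ^ n) := by
          exact add_le_add le_rfl (ENNReal.tsum_le_tsum fun i => ih (c i) (s i) (hs0 i))
      _ = ENNReal.ofReal (C * l ^ n) +
          ENNReal.ofReal (C * (∑ k ∈ Finset.range N, (1 - η) ^ k) * ∑' i, s i ^ n) := by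
          have h0 : (0:ℝ) ≤ ∑ k ∈ Finset.range N, (1 - η) ^ k :=
            Finset.sum_nonneg fun k _ => pow_nonneg h1η0 k
          rw [← ENNReal.ofReal_tsum_of_nonneg
            (fun i => mul_nonneg (mul_nonneg hC.le h0) (pow_nonneg (hs0 i) n))
            (hsummable.mul_left _), ← tsum_mul_left]
      _ ≤ ENNReal.ofReal (C * l ^ n) +
          ENNReal.ofReal (C * (∑ k ∈ Finset.range N, (1 - η) ^ k) * ((1 - η) * l ^ n)) := by
          refine add_le_add le_rfl (ENNReal.ofReal_le_ofReal ?_)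
          refine mul_le_mul_of_nonneg_left hsum ?_
          have h0 : (0:ℝ) ≤ ∑ k ∈ Finset.range N, (1 - η) ^ k :=
            Finset.sum_nonneg fun k _ => pow_nonneg h1η0 k
          exact mul_nonneg hC.le h0
      _ = ENNReal.ofReal (C * (∑ k ∈ Finset.range (N + 1), (1 - η) ^ k) * l ^ n) := by
          rw [← ENNReal.ofReal_add (by positivity) ?nn]
          case nn =>
            have h0 : (0:ℝ) ≤ ∑ k ∈ Finset.range N, (1 - η) ^ k :=
              Finset.sum_nonneg fun k _ => pow_nonneg h1η0 k
            have h1 : (0:ℝ) ≤ (1 - η) * l ^ n := by positivity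
            exact mul_nonneg (mul_nonneg hC.le h0) h1
          congr 1
          rw [geom_sum_succ]
          ring

/-- If for every cube `Q` one can find countably many pairwise disjoint subcubes `Q_i ⊆ Q`
with `∑ |Q_i| ≤ (1-η)|Q|` and `μ(R_Q \ ⋃ R_{Q_i}) ≤ C|Q|`, then `μ` is a Carleson measure
with Carleson norm at most `C/η`. -/
theorem carleson_via_subcubes (n : ℕ) (μ : Measure ((Fin n → ℝ) × ℝ))
    (C η : ℝ) (hC : 0 < C) (hη : η ∈ Ioo (0 : ℝ) 1)
    (h : ∀ (a : Fin n → ℝ) (l : ℝ), 0 < l →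
      ∃ (c : ℕ → (Fin n → ℝ)) (s : ℕ → ℝ),
        (∀ i, 0 ≤ s i) ∧
        (∀ i, cube n (c i) (s i) ⊆ cube n a l) ∧
        Pairwise (fun i j => Disjoint (cube n (c i) (s i)) (cube n (c j) (s j))) ∧
        (∑' i, (s i) ^ n) ≤ (1 - η) * l ^ n ∧
        μ (carlesonBox n a l \ ⋃ i, carlesonBox n (c i) (s i)) ≤ ENNReal.ofReal (C * l ^ n)) :
    ∀ (a : Fin n → ℝ) (l : ℝ), 0 < l →
      μ (carlesonBox n a l) ≤ ENNReal.ofReal ((C / η) * l ^ n) := by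
  obtain ⟨hη0, hη1⟩ := hη
  have h1η0 : (0:ℝ) ≤ 1 - η := by linarith
  have h1η1 : (1:ℝ) - η < 1 := by linarith
  intro a l hl
  -- the union representation
  have hcover : carlesonBox n a l = ⋃ N : ℕ,
      (carlesonBox n a l ∩ {p | (1 - η) ^ N * l ^ n < p.2 ^ n}) := by
    apply Subset.antisymm
    · intro p hp
      have hp2 : 0 < p.2 := hp.2.1
      have hpn : 0 < p.2 ^ n := pow_pos hp2 n
      have hln : 0 < l ^ n := pow_pos hl n
      obtain ⟨N, hN⟩ := exists_pow_lt_of_lt_one (x := p.2 ^ n / l ^ n) (by positivity) h1η1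
      refine mem_iUnion.2 ⟨N, hp, ?_⟩
      calc (1 - η) ^ N * l ^ n < (p.2 ^ n / l ^ n) * l ^ n :=
            mul_lt_mul_of_pos_right hN hln
        _ = p.2 ^ n := div_mul_cancel₀ _ hln.ne'
    · exact iUnion_subset fun N => inter_subset_left
  have hmono : Monotone fun N : ℕ =>
      carlesonBox n a l ∩ {p | (1 - η) ^ N * l ^ n < p.2 ^ n} := by
    intro N M hNM
    refine inter_subset_inter_right _ fun p hp => ?_
    simp only [mem_setOf_eq] at hp ⊢
    refine lt_of_le_of_lt ?_ hp
    exact mul_le_mul_of_nonneg_right (pow_le_pow_of_le_one h1η0 h1η1.le hNM) (by positivity)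
  rw [hcover, (hmono.directed_le).measure_iUnion]
  refine iSup_le fun N => le_trans (carleson_key n μ C η hC ⟨hη0, hη1⟩ h N a l hl.le) ?_
  apply ENNReal.ofReal_le_ofReal
  have hgeom : (∑ k ∈ Finset.range N, (1 - η) ^ k) ≤ 1 / η := by
    have hs := Summable.sum_le_tsum (Finset.range N) (fun k _ => pow_nonneg h1η0 k)
      (summable_geometric_of_lt_one h1η0 h1η1)
    rw [tsum_geometric_of_lt_one h1η0 h1η1] at hs
    simpa [one_div] using hs
  calc C * (∑ k ∈ Finset.range N, (1 - η) ^ k) * l ^ n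
      ≤ C * (1 / η) * l ^ n := by
        refine mul_le_mul_of_nonneg_right (mul_le_mul_of_nonneg_left hgeom hC.le) (by positivity)
    _ = (C / η) * l ^ n := by ring
end

section
/- Let (V_t)_{t>0} and (Δ_s)_{s>0} be families of bounded operators on L²(ℝⁿ), with each Δ_s self-adjoint, satisfying the Calderón reproducing formula f = ∫₀^∞ Δ_s² f ds/s (convergence in L², in the sense that ⟨f,g⟩ = ∫₀^∞ ⟨Δ_s f, Δ_s g⟩ ds/s for all f,g), and the almost-orthogonality bound ‖V_t Δ_s‖_{op} ≤ C min(t/s, s/t)^α for some α > 0 and all s,t > 0. Then the square function estimate (∫₀^∞ ‖V_t f‖₂² dt/t)^{1/2} ≤ C' ‖f‖₂ holds for all f ∈ L²(ℝⁿ), with C' depending only on C and α. -/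
open MeasureTheory Set
open scoped InnerProductSpace ENNReal

lemma sfe_ker {α : ℝ} (hα : 0 < α) {t : ℝ} (ht : 0 < t) :
    ∫⁻ s in Ioi (0:ℝ), ENNReal.ofReal (min (t/s) (s/t) ^ α / s) ≤ ENNReal.ofReal (2/α) := by
  have hsplit : (Ioi (0:ℝ)) = Ioc 0 t ∪ Ioi t := (Ioc_union_Ioi_eq_Ioi ht.le).symm
  rw [hsplit, lintegral_union measurableSet_Ioi (Ioc_disjoint_Ioi le_rfl)]
  have h1 : ∫⁻ s in Ioc (0:ℝ) t, ENNReal.ofReal (min (t/s) (s/t) ^ α / s)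
      = ENNReal.ofReal (1/α) := by
    have hcong : ∀ s ∈ Ioc (0:ℝ) t, ENNReal.ofReal (min (t/s) (s/t) ^ α / s)
        = ENNReal.ofReal (s ^ (α-1) * t ^ (-α)) := by
      intro s hs
      obtain ⟨hs0, hst⟩ := hs
      have hmin : min (t/s) (s/t) = s/t := by
        apply min_eq_right
        rw [div_le_div_iff₀ ht hs0]
        nlinarith
      rw [hmin, Real.div_rpow hs0.le ht.le, Real.rpow_sub hs0, Real.rpow_one,
        Real.rpow_neg ht.le]
      ring_nf
    rw [setLIntegral_congr_fun measurableSet_Ioc hcong]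
    have hint : IntegrableOn (fun s : ℝ => s ^ (α-1) * t ^ (-α)) (Ioc 0 t) volume := by
      have := (intervalIntegral.intervalIntegrable_rpow' (a := 0) (b := t) (r := α - 1) (by linarith))
      rw [intervalIntegrable_iff_integrableOn_Ioc_of_le ht.le] at this
      exact this.mul_const _
    rw [← ofReal_integral_eq_lintegral_ofReal hint
      ((ae_restrict_mem measurableSet_Ioc).mono fun s hs =>
        mul_nonneg (Real.rpow_nonneg hs.1.le _) (Real.rpow_nonneg ht.le _))]
    congr 1
    rw [MeasureTheory.integral_mul_const]
    have : ∫ s in Ioc (0:ℝ) t, s ^ (α - 1) = t ^ α / α := by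
      rw [← intervalIntegral.integral_of_le ht.le,
        integral_rpow (Or.inl (by linarith : (-1:ℝ) < α - 1))]
      rw [sub_add_cancel, Real.zero_rpow hα.ne', sub_zero]
    rw [this, Real.rpow_neg ht.le]
    have htα : (0:ℝ) < t ^ α := Real.rpow_pos_of_pos ht α
    field_simp
  have h2 : ∫⁻ s in Ioi t, ENNReal.ofReal (min (t/s) (s/t) ^ α / s)
      = ENNReal.ofReal (1/α) := by
    have hcong : ∀ s ∈ Ioi t, ENNReal.ofReal (min (t/s) (s/t) ^ α / s)
        = ENNReal.ofReal (s ^ (-α-1) * t ^ α) := by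
      intro s hs
      have hs0 : (0:ℝ) < s := ht.trans hs
      have hmin : min (t/s) (s/t) = t/s := by
        apply min_eq_left
        rw [div_le_div_iff₀ hs0 ht]
        nlinarith [le_of_lt (show t < s from hs)]
      rw [hmin, Real.div_rpow ht.le hs0.le]
      rw [show -α - 1 = -(α+1) by ring, Real.rpow_neg hs0.le,
        Real.rpow_add hs0, Real.rpow_one]
      field_simp
    rw [setLIntegral_congr_fun measurableSet_Ioi hcong]
    have hint : IntegrableOn (fun s : ℝ => s ^ (-α-1) * t ^ α) (Ioi t) volume :=
      (integrableOn_Ioi_rpow_of_lt (by linarith) ht).mul_const _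
    rw [← ofReal_integral_eq_lintegral_ofReal hint
      ((ae_restrict_mem measurableSet_Ioi).mono fun s hs =>
        mul_nonneg (Real.rpow_nonneg (ht.trans hs).le _) (Real.rpow_nonneg ht.le _))]
    congr 1
    rw [MeasureTheory.integral_mul_const, integral_Ioi_rpow_of_lt (by linarith) ht]
    have htα : (0:ℝ) < t ^ α := Real.rpow_pos_of_pos ht α
    have h3 : t ^ (-α - 1 + 1) = (t ^ α)⁻¹ := by
      rw [show -α - 1 + 1 = -α by ring, Real.rpow_neg ht.le]
    rw [h3]
    field_simp
    rw [show -α - 1 + 1 = -α by ring, div_neg, neg_neg, div_self hα.ne']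
  rw [h1, h2, ← ENNReal.ofReal_add (by positivity) (by positivity)]
  ring_nf
  exact le_refl _


lemma sfe_inner_self {E : Type*} [NormedAddCommGroup E] [InnerProductSpace ℂ E] (x : E) :
    ⟪x, x⟫_ℂ = ((‖x‖^2 : ℝ) : ℂ) := by
  rw [inner_self_eq_norm_sq_to_K]; norm_cast

set_option maxHeartbeats 1000000 in
/-- Schur-lemma square function estimate on `L²(ℝⁿ)`: if `(Δ_s)` are self-adjoint, satisfy the
Calderón reproducing formula `⟨f,g⟩ = ∫₀^∞ ⟨Δ_s f, Δ_s g⟩ ds/s`, and the almost-orthogonality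
bound `‖V_t Δ_s‖ ≤ C min(t/s, s/t)^α` holds, then `∫₀^∞ ‖V_t f‖₂² dt/t ≤ C'² ‖f‖₂²` with `C'`
depending only on `C` and `α`. -/
theorem square_function_estimate_of_almost_orthogonality (C α : ℝ) (hC : 0 < C) (hα : 0 < α) :
    ∃ C' : ℝ, 0 < C' ∧
      ∀ (n : ℕ)
        (Δ V : ℝ → Lp ℂ 2 (volume : Measure (Fin n → ℝ)) →L[ℂ]
          Lp ℂ 2 (volume : Measure (Fin n → ℝ))),
        (∀ s, 0 < s → IsSelfAdjoint (Δ s)) →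
        (∀ f g : Lp ℂ 2 (volume : Measure (Fin n → ℝ)),
          IntegrableOn (fun s : ℝ => ⟪Δ s f, Δ s g⟫_ℂ / (s : ℂ)) (Ioi (0 : ℝ)) volume) →
        (∀ f g : Lp ℂ 2 (volume : Measure (Fin n → ℝ)),
          ⟪f, g⟫_ℂ = ∫ s in Ioi (0 : ℝ), ⟪Δ s f, Δ s g⟫_ℂ / (s : ℂ)) →
        (∀ s t : ℝ, 0 < s → 0 < t →
          ‖(V t).comp (Δ s)‖ ≤ C * Real.rpow (min (t / s) (s / t)) α) →
        ∀ f : Lp ℂ 2 (volume : Measure (Fin n → ℝ)),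
          ∫⁻ t in Ioi (0 : ℝ), ENNReal.ofReal (‖V t f‖ ^ 2 / t) ≤
            ENNReal.ofReal (C' * ‖f‖ ^ 2) := by
  refine ⟨(2*C/α)^2, by positivity, ?_⟩
  intro n Δ V hsa hInt hCal hbound f
  have hbound' : ∀ s t : ℝ, 0 < s → 0 < t →
      ‖(V t).comp (Δ s)‖ ≤ C * min (t/s) (s/t) ^ α := hbound
  have hA0 : (0:ℝ) < 2*C/α := by positivity
  set A : ℝ≥0∞ := ENNReal.ofReal (2*C/α) with hAdef
  have hAne : A ≠ ⊤ := ENNReal.ofReal_ne_top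
  set k : ℝ → ℝ → ℝ≥0∞ :=
    fun t s => ENNReal.ofReal (C * min (t/s) (s/t) ^ α / s) with hkdef
  have hknn : ∀ t s : ℝ, 0 < t → 0 < s → (0:ℝ) ≤ C * min (t/s) (s/t) ^ α / s := by
    intro t s ht hs
    have hmin : (0:ℝ) ≤ min (t/s) (s/t) := le_min (by positivity) (by positivity)
    exact div_nonneg (mul_nonneg hC.le (Real.rpow_nonneg hmin α)) hs.le
  -- measurability of s ↦ ‖Δ s f‖²
  have hgm : AEMeasurable (fun s => ENNReal.ofReal (‖Δ s f‖^2))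
      ((volume : Measure ℝ).restrict (Ioi 0)) := by
    have h1 : AEMeasurable (fun s : ℝ => ⟪Δ s f, Δ s f⟫_ℂ / (s:ℂ))
        ((volume : Measure ℝ).restrict (Ioi 0)) := (hInt f f).aemeasurable
    have h2 : AEMeasurable
        (fun s : ℝ => ENNReal.ofReal (((s:ℂ) * (⟪Δ s f, Δ s f⟫_ℂ / (s:ℂ))).re))
        ((volume : Measure ℝ).restrict (Ioi 0)) :=
      ENNReal.measurable_ofReal.comp_aemeasurable
        (Complex.measurable_re.comp_aemeasurable
          ((Complex.measurable_ofReal.aemeasurable).mul h1))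
    refine h2.congr ?_
    filter_upwards [ae_restrict_mem measurableSet_Ioi] with s hs
    have hs0 : (s:ℂ) ≠ 0 := by exact_mod_cast (ne_of_gt hs)
    rw [mul_div_cancel₀ _ hs0, sfe_inner_self, Complex.ofReal_re]
  -- Calderón identity for f in ENNReal form
  have hpt0 : ∀ s ∈ Ioi (0:ℝ), (⟪Δ s f, Δ s f⟫_ℂ / (s:ℂ)).re = ‖Δ s f‖^2 / s := by
    intro s _
    rw [sfe_inner_self, ← Complex.ofReal_div, Complex.ofReal_re]
  have hCalf : ∫⁻ s in Ioi (0:ℝ), ENNReal.ofReal (‖Δ s f‖^2) / ENNReal.ofReal s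
      = ENNReal.ofReal (‖f‖^2) := by
    have hint2 : IntegrableOn (fun s : ℝ => ‖Δ s f‖^2 / s) (Ioi 0) volume := by
      refine ((hInt f f).re).congr ?_
      filter_upwards [ae_restrict_mem measurableSet_Ioi] with s hs
      simpa using hpt0 s hs
    have hreal : ∫ s in Ioi (0:ℝ), ‖Δ s f‖^2 / s = ‖f‖^2 := by
      have h2 : ∫ s in Ioi (0:ℝ), ‖Δ s f‖^2 / s
          = ∫ s in Ioi (0:ℝ), (⟪Δ s f, Δ s f⟫_ℂ / (s:ℂ)).re :=
        setIntegral_congr_fun measurableSet_Ioi fun s hs => (hpt0 s hs).symm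
      have h3 : ∫ s in Ioi (0:ℝ), (⟪Δ s f, Δ s f⟫_ℂ / (s:ℂ)).re
          = (∫ s in Ioi (0:ℝ), ⟪Δ s f, Δ s f⟫_ℂ / (s:ℂ)).re := by
        have := integral_re (μ := (volume : Measure ℝ).restrict (Ioi 0)) (hInt f f)
        simpa using this
      rw [h2, h3, ← hCal f f, sfe_inner_self, Complex.ofReal_re]
    have hnn : 0 ≤ᵐ[(volume : Measure ℝ).restrict (Ioi 0)] fun s => ‖Δ s f‖^2 / s := by
      filter_upwards [ae_restrict_mem measurableSet_Ioi] with s hs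
      have hs0 : (0:ℝ) < s := hs
      positivity
    rw [← hreal, ofReal_integral_eq_lintegral_ofReal hint2 hnn]
    refine setLIntegral_congr_fun measurableSet_Ioi
      (fun s hs => ?_)
    rw [ENNReal.ofReal_div_of_pos hs]
  -- kernel integral bound
  have hK : ∀ t : ℝ, 0 < t → ∫⁻ s in Ioi (0:ℝ), k t s ≤ A := by
    intro t ht
    have heq : ∀ s : ℝ, k t s
        = ENNReal.ofReal C * ENNReal.ofReal (min (t/s) (s/t) ^ α / s) := by
      intro s
      simp only [hkdef]
      rw [mul_div_assoc, ENNReal.ofReal_mul hC.le]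
    simp_rw [heq]
    rw [lintegral_const_mul' _ _ ENNReal.ofReal_ne_top]
    calc ENNReal.ofReal C * ∫⁻ s in Ioi (0:ℝ), ENNReal.ofReal (min (t/s) (s/t) ^ α / s)
        ≤ ENNReal.ofReal C * ENNReal.ofReal (2/α) := mul_le_mul_right (sfe_ker hα ht) _
      _ = A := by rw [← ENNReal.ofReal_mul hC.le]; congr 1; ring
  -- symmetric kernel integral bound (integration in t)
  have hK' : ∀ s : ℝ, 0 < s →
      ∫⁻ t in Ioi (0:ℝ), ENNReal.ofReal (C * min (t/s) (s/t) ^ α / t) ≤ A := by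
    intro s hs
    have h0 := hK s hs
    simp only [hkdef] at h0
    convert h0 using 4 with t
    rw [min_comm]
  -- the main pointwise bound
  set I : ℝ → ℝ≥0∞ :=
    fun t => ∫⁻ s in Ioi (0:ℝ), k t s * ENNReal.ofReal (‖Δ s f‖^2) with hIdef
  have hkm : ∀ t : ℝ, Measurable (fun s : ℝ => k t s) := by
    intro t
    apply Measurable.ennreal_ofReal
    apply Measurable.div _ measurable_id
    exact (((measurable_const.div measurable_id).min
      (measurable_id.div measurable_const)).pow measurable_const).const_mul C
  have hmain : ∀ t : ℝ, 0 < t → ENNReal.ofReal (‖V t f‖^2) ≤ A * I t := by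
    intro t ht
    set h := V t f with hh
    by_cases hz : ‖h‖ = 0
    · rw [hz]; simp
    have hh0 : (0:ℝ) < ‖h‖ := lt_of_le_of_ne (norm_nonneg _) (Ne.symm hz)
    set w := ContinuousLinearMap.adjoint (V t) h with hw
    have hid : ((‖h‖^2 : ℝ) : ℂ) = ∫ s in Ioi (0:ℝ), ⟪Δ s f, Δ s w⟫_ℂ / (s:ℂ) := by
      rw [← sfe_inner_self]
      calc ⟪h, h⟫_ℂ = ⟪f, w⟫_ℂ :=
            (ContinuousLinearMap.adjoint_inner_right (V t) f h).symm
        _ = _ := hCal f w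
    have h1 : ENNReal.ofReal (‖h‖^2)
        ≤ ∫⁻ s in Ioi (0:ℝ), (‖⟪Δ s f, Δ s w⟫_ℂ / (s:ℂ)‖₊ : ℝ≥0∞) := by
      have e1 : ENNReal.ofReal (‖h‖^2) = (‖((‖h‖^2 : ℝ) : ℂ)‖₊ : ℝ≥0∞) := by
        change _ = ‖((‖h‖^2 : ℝ) : ℂ)‖ₑ
        rw [← ofReal_norm, Complex.norm_real, Real.norm_eq_abs,
          abs_of_nonneg (by positivity)]
      rw [e1, hid]
      exact enorm_integral_le_lintegral_enorm _
    have h2 : ∀ s ∈ Ioi (0:ℝ), (‖⟪Δ s f, Δ s w⟫_ℂ / (s:ℂ)‖₊ : ℝ≥0∞)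
        ≤ ENNReal.ofReal (C * min (t/s) (s/t) ^ α / s * ‖Δ s f‖) * ENNReal.ofReal ‖h‖ := by
      intro s hs
      have hs0 : (0:ℝ) < s := hs
      have key1 := ContinuousLinearMap.adjoint_inner_left (Δ s) w (Δ s f)
      rw [(hsa s hs0).adjoint_eq] at key1
      have key2 := ContinuousLinearMap.adjoint_inner_right (V t) ((Δ s) ((Δ s) f)) h
      have hnrm : ‖⟪Δ s f, Δ s w⟫_ℂ / (s:ℂ)‖
          ≤ C * min (t/s) (s/t) ^ α / s * ‖Δ s f‖ * ‖h‖ := by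
        rw [← key1, hw, key2, norm_div, Complex.norm_real, Real.norm_eq_abs,
          abs_of_pos hs0]
        have h4 : ‖(V t) ((Δ s) ((Δ s) f))‖ ≤ C * min (t/s) (s/t) ^ α * ‖(Δ s) f‖ := by
          calc ‖(V t) ((Δ s) ((Δ s) f))‖ = ‖((V t).comp (Δ s)) ((Δ s) f)‖ := rfl
            _ ≤ ‖(V t).comp (Δ s)‖ * ‖(Δ s) f‖ := ContinuousLinearMap.le_opNorm _ _
            _ ≤ C * min (t/s) (s/t) ^ α * ‖(Δ s) f‖ :=
                mul_le_mul_of_nonneg_right (hbound' s t hs0 ht) (norm_nonneg _)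
        have h5 : ‖⟪(V t) ((Δ s) ((Δ s) f)), h⟫_ℂ‖
            ≤ C * min (t/s) (s/t) ^ α * ‖(Δ s) f‖ * ‖h‖ :=
          le_trans (norm_inner_le_norm _ _) (mul_le_mul_of_nonneg_right h4 (norm_nonneg _))
        calc ‖⟪(V t) ((Δ s) ((Δ s) f)), h⟫_ℂ‖ / s
            ≤ (C * min (t/s) (s/t) ^ α * ‖(Δ s) f‖ * ‖h‖) / s := by gcongr
          _ = C * min (t/s) (s/t) ^ α / s * ‖(Δ s) f‖ * ‖h‖ := by ring
      calc (‖⟪Δ s f, Δ s w⟫_ℂ / (s:ℂ)‖₊ : ℝ≥0∞)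
          = ENNReal.ofReal ‖⟪Δ s f, Δ s w⟫_ℂ / (s:ℂ)‖ :=
            (ofReal_norm _).symm
        _ ≤ ENNReal.ofReal (C * min (t/s) (s/t) ^ α / s * ‖Δ s f‖ * ‖h‖) :=
            ENNReal.ofReal_le_ofReal hnrm
        _ = _ := ENNReal.ofReal_mul (mul_nonneg (hknn t s ht hs0) (norm_nonneg _))
    -- Cauchy–Schwarz (Hölder) step
    set φ : ℝ → ℝ≥0∞ := fun s => (k t s) ^ ((1:ℝ)/2) with hφ
    set ψ : ℝ → ℝ≥0∞ := fun s => (k t s) ^ ((1:ℝ)/2) * ENNReal.ofReal ‖Δ s f‖ with hψ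
    have hholder : ∫⁻ s in Ioi (0:ℝ),
        ENNReal.ofReal (C * min (t/s) (s/t) ^ α / s * ‖Δ s f‖)
        ≤ A ^ ((1:ℝ)/2) * (I t) ^ ((1:ℝ)/2) := by
      have heq : ∀ᵐ s ∂((volume : Measure ℝ).restrict (Ioi 0)),
          ENNReal.ofReal (C * min (t/s) (s/t) ^ α / s * ‖Δ s f‖) = φ s * ψ s := by
        filter_upwards [ae_restrict_mem measurableSet_Ioi] with s hs
        have hs0 : (0:ℝ) < s := hs
        rw [ENNReal.ofReal_mul (hknn t s ht hs0)]
        have e0 : φ s * ψ s = (φ s * φ s) * ENNReal.ofReal ‖Δ s f‖ := by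
          rw [hψ]; ring
        rw [e0, hφ]
        congr 1
        rw [← ENNReal.rpow_add_of_nonneg _ _ (by norm_num) (by norm_num)]
        norm_num
        rfl
      rw [lintegral_congr_ae heq]
      have hφm : AEMeasurable φ ((volume : Measure ℝ).restrict (Ioi 0)) :=
        (((hkm t).pow measurable_const)).aemeasurable
      have hnm : AEMeasurable (fun s => ENNReal.ofReal ‖Δ s f‖)
          ((volume : Measure ℝ).restrict (Ioi 0)) := by
        have e : (fun s => ENNReal.ofReal ‖Δ s f‖)
            = fun s => (ENNReal.ofReal (‖Δ s f‖^2)) ^ ((1:ℝ)/2) := by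
          funext s
          rw [ENNReal.ofReal_pow (norm_nonneg _), ← ENNReal.rpow_natCast,
            ← ENNReal.rpow_mul]
          norm_num
        rw [e]
        exact hgm.pow aemeasurable_const
      have hψm : AEMeasurable ψ ((volume : Measure ℝ).restrict (Ioi 0)) :=
        hφm.mul hnm
      have hCS := ENNReal.lintegral_mul_le_Lp_mul_Lq
        ((volume : Measure ℝ).restrict (Ioi 0))
        Real.HolderConjugate.two_two hφm hψm
      simp only [Pi.mul_apply] at hCS
      refine hCS.trans ?_
      have e1 : ∫⁻ s in Ioi (0:ℝ), φ s ^ (2:ℝ) = ∫⁻ s in Ioi (0:ℝ), k t s := by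
        refine lintegral_congr fun s => ?_
        rw [hφ, ← ENNReal.rpow_mul]
        norm_num
      have e2 : ∫⁻ s in Ioi (0:ℝ), ψ s ^ (2:ℝ) = I t := by
        refine lintegral_congr fun s => ?_
        rw [hψ, ENNReal.mul_rpow_of_nonneg _ _ (by norm_num), ← ENNReal.rpow_mul]
        have e3 : ENNReal.ofReal ‖Δ s f‖ ^ (2:ℝ) = ENNReal.ofReal (‖Δ s f‖^2) := by
          rw [ENNReal.ofReal_pow (norm_nonneg _), ← ENNReal.rpow_natCast]
          norm_num
        rw [e3]
        norm_num
      rw [e1, e2]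
      have : (∫⁻ s in Ioi (0:ℝ), k t s) ^ ((1:ℝ)/2) ≤ A ^ ((1:ℝ)/2) :=
        ENNReal.rpow_le_rpow (hK t ht) (by norm_num)
      have h12 : (1:ℝ)/(2:ℝ) = 1/2 := rfl
      calc (∫⁻ s in Ioi (0:ℝ), k t s) ^ ((1:ℝ)/2) * (I t) ^ ((1:ℝ)/2)
          ≤ A ^ ((1:ℝ)/2) * (I t) ^ ((1:ℝ)/2) := mul_le_mul_left this _
        _ = _ := rfl
    have h6 : ENNReal.ofReal (‖h‖^2)
        ≤ (A ^ ((1:ℝ)/2) * (I t) ^ ((1:ℝ)/2)) * ENNReal.ofReal ‖h‖ := by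
      refine h1.trans ?_
      calc ∫⁻ s in Ioi (0:ℝ), (‖⟪Δ s f, Δ s w⟫_ℂ / (s:ℂ)‖₊ : ℝ≥0∞)
          ≤ ∫⁻ s in Ioi (0:ℝ),
              ENNReal.ofReal (C * min (t/s) (s/t) ^ α / s * ‖Δ s f‖) * ENNReal.ofReal ‖h‖ := by
            refine lintegral_mono_ae ?_
            filter_upwards [ae_restrict_mem measurableSet_Ioi] with s hs
            exact h2 s hs
        _ = (∫⁻ s in Ioi (0:ℝ),
              ENNReal.ofReal (C * min (t/s) (s/t) ^ α / s * ‖Δ s f‖)) * ENNReal.ofReal ‖h‖ :=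
            lintegral_mul_const' _ _ ENNReal.ofReal_ne_top
        _ ≤ _ := mul_le_mul_left hholder _
    have hne0 : ENNReal.ofReal ‖h‖ ≠ 0 := (ENNReal.ofReal_pos.2 hh0).ne'
    have e2 : ENNReal.ofReal (‖h‖^2) = ENNReal.ofReal ‖h‖ * ENNReal.ofReal ‖h‖ := by
      rw [← ENNReal.ofReal_mul (norm_nonneg _), ← pow_two]
    have hsq : ENNReal.ofReal ‖h‖ ≤ A ^ ((1:ℝ)/2) * (I t) ^ ((1:ℝ)/2) := by
      rw [e2] at h6
      exact (ENNReal.mul_le_mul_iff_left hne0 ENNReal.ofReal_ne_top).1 h6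
    rw [e2]
    calc ENNReal.ofReal ‖h‖ * ENNReal.ofReal ‖h‖
        ≤ (A ^ ((1:ℝ)/2) * (I t) ^ ((1:ℝ)/2)) * (A ^ ((1:ℝ)/2) * (I t) ^ ((1:ℝ)/2)) :=
          mul_le_mul' hsq hsq
      _ = (A ^ ((1:ℝ)/2) * A ^ ((1:ℝ)/2)) * ((I t) ^ ((1:ℝ)/2) * (I t) ^ ((1:ℝ)/2)) := by
          ring
      _ = A * I t := by
          rw [← ENNReal.rpow_add_of_nonneg _ _ (by norm_num) (by norm_num),
            ← ENNReal.rpow_add_of_nonneg _ _ (by norm_num) (by norm_num)]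
          norm_num
  -- final integration
  have hfinal : ∫⁻ t in Ioi (0:ℝ), ENNReal.ofReal (‖V t f‖^2 / t)
      ≤ A * (A * ENNReal.ofReal (‖f‖^2)) := by
    have step1 : ∫⁻ t in Ioi (0:ℝ), ENNReal.ofReal (‖V t f‖^2 / t)
        ≤ ∫⁻ t in Ioi (0:ℝ), A * I t / ENNReal.ofReal t := by
      refine lintegral_mono_ae ?_
      filter_upwards [ae_restrict_mem measurableSet_Ioi] with t ht
      rw [ENNReal.ofReal_div_of_pos ht]
      exact ENNReal.div_le_div_right (hmain t ht) _
    refine step1.trans ?_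
    have step2 : ∫⁻ t in Ioi (0:ℝ), A * I t / ENNReal.ofReal t
        = A * ∫⁻ t in Ioi (0:ℝ), I t / ENNReal.ofReal t := by
      rw [← lintegral_const_mul' _ _ hAne]
      refine lintegral_congr fun t => ?_
      rw [mul_div_assoc]
    rw [step2]
    have step3 : ∫⁻ t in Ioi (0:ℝ), I t / ENNReal.ofReal t
        ≤ A * ENNReal.ofReal (‖f‖^2) := by
      have e3 : ∫⁻ t in Ioi (0:ℝ), I t / ENNReal.ofReal t
          = ∫⁻ t in Ioi (0:ℝ), ∫⁻ s in Ioi (0:ℝ),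
              (k t s * ENNReal.ofReal (‖Δ s f‖^2)) * (ENNReal.ofReal t)⁻¹ := by
        refine lintegral_congr_ae ?_
        filter_upwards [ae_restrict_mem measurableSet_Ioi] with t ht
        have hne : (ENNReal.ofReal t)⁻¹ ≠ ⊤ :=
          ENNReal.inv_ne_top.mpr (ENNReal.ofReal_pos.2 ht).ne'
        rw [hIdef, div_eq_mul_inv, lintegral_mul_const' _ _ hne]
      rw [e3]
      have hswap : ∫⁻ t in Ioi (0:ℝ), ∫⁻ s in Ioi (0:ℝ),
              (k t s * ENNReal.ofReal (‖Δ s f‖^2)) * (ENNReal.ofReal t)⁻¹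
          = ∫⁻ s in Ioi (0:ℝ), ∫⁻ t in Ioi (0:ℝ),
              (k t s * ENNReal.ofReal (‖Δ s f‖^2)) * (ENNReal.ofReal t)⁻¹ := by
        refine lintegral_lintegral_swap ?_
        have m1 : Measurable (fun p : ℝ × ℝ => k p.1 p.2) := by
          apply Measurable.ennreal_ofReal
          apply Measurable.div _ measurable_snd
          exact (((measurable_fst.div measurable_snd).min
            (measurable_snd.div measurable_fst)).pow measurable_const).const_mul C
        have m2 : AEMeasurable (fun p : ℝ × ℝ => ENNReal.ofReal (‖Δ p.2 f‖^2))
            (((volume : Measure ℝ).restrict (Ioi 0)).prod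
              ((volume : Measure ℝ).restrict (Ioi 0))) :=
          hgm.comp_quasiMeasurePreserving Measure.quasiMeasurePreserving_snd
        have m3 : Measurable (fun p : ℝ × ℝ => (ENNReal.ofReal p.1)⁻¹) :=
          (ENNReal.measurable_ofReal.comp measurable_fst).inv
        exact ((m1.aemeasurable.mul m2).mul m3.aemeasurable)
      rw [hswap]
      have hinner : ∀ s ∈ Ioi (0:ℝ),
          (∫⁻ t in Ioi (0:ℝ), (k t s * ENNReal.ofReal (‖Δ s f‖^2)) * (ENNReal.ofReal t)⁻¹)
          ≤ A * (ENNReal.ofReal (‖Δ s f‖^2) / ENNReal.ofReal s) := by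
        intro s hs
        have hs0 : (0:ℝ) < s := hs
        have hsne : (ENNReal.ofReal s)⁻¹ ≠ ⊤ :=
          ENNReal.inv_ne_top.mpr (ENNReal.ofReal_pos.2 hs0).ne'
        have e4 : ∀ᵐ t ∂((volume : Measure ℝ).restrict (Ioi 0)),
            (k t s * ENNReal.ofReal (‖Δ s f‖^2)) * (ENNReal.ofReal t)⁻¹
            = ENNReal.ofReal (‖Δ s f‖^2) *
              (ENNReal.ofReal (C * min (t/s) (s/t) ^ α / t) * (ENNReal.ofReal s)⁻¹) := by
          filter_upwards [ae_restrict_mem measurableSet_Ioi] with t ht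
          have hkts : k t s = ENNReal.ofReal (C * min (t/s) (s/t) ^ α) * (ENNReal.ofReal s)⁻¹ := by
            simp only [hkdef]
            rw [ENNReal.ofReal_div_of_pos hs0, div_eq_mul_inv]
          have hktt : ENNReal.ofReal (C * min (t/s) (s/t) ^ α / t)
              = ENNReal.ofReal (C * min (t/s) (s/t) ^ α) * (ENNReal.ofReal t)⁻¹ := by
            rw [ENNReal.ofReal_div_of_pos ht, div_eq_mul_inv]
          rw [hkts, hktt]
          ring
        rw [lintegral_congr_ae e4, lintegral_const_mul' _ _ ENNReal.ofReal_ne_top,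
          lintegral_mul_const' _ _ hsne]
        calc ENNReal.ofReal (‖Δ s f‖^2) *
              ((∫⁻ t in Ioi (0:ℝ), ENNReal.ofReal (C * min (t/s) (s/t) ^ α / t))
                * (ENNReal.ofReal s)⁻¹)
            ≤ ENNReal.ofReal (‖Δ s f‖^2) * (A * (ENNReal.ofReal s)⁻¹) :=
              mul_le_mul_right (mul_le_mul_left (hK' s hs0) _) _
          _ = A * (ENNReal.ofReal (‖Δ s f‖^2) / ENNReal.ofReal s) := by
              rw [div_eq_mul_inv]; ring
      calc ∫⁻ s in Ioi (0:ℝ), ∫⁻ t in Ioi (0:ℝ),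
              (k t s * ENNReal.ofReal (‖Δ s f‖^2)) * (ENNReal.ofReal t)⁻¹
          ≤ ∫⁻ s in Ioi (0:ℝ), A * (ENNReal.ofReal (‖Δ s f‖^2) / ENNReal.ofReal s) := by
            refine lintegral_mono_ae ?_
            filter_upwards [ae_restrict_mem measurableSet_Ioi] with s hs
            exact hinner s hs
        _ = A * ∫⁻ s in Ioi (0:ℝ), ENNReal.ofReal (‖Δ s f‖^2) / ENNReal.ofReal s :=
            lintegral_const_mul' _ _ hAne
        _ = A * ENNReal.ofReal (‖f‖^2) := by rw [hCalf]
    exact mul_le_mul_right step3 _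
  refine hfinal.trans_eq ?_
  rw [← ENNReal.ofReal_mul (by positivity), ← ENNReal.ofReal_mul hA0.le]
  congr 1
  ring
end

section
/- Let c_n = b_n 2ⁿ/(1+2ⁿ) where b_n = i/(πn) for n ≠ 0, b_0 = 0. Then the function ĉ(θ) = ∑_{n∈ℤ} c_n e^{inθ} is not essentially bounded on [0,2π]; in fact ĉ(θ) ∼ −(i/π) ln|sin(θ/2)| as θ → 0, so ĉ ∉ L^∞. -/
open Filter Set
open Topology

/-- The coefficient sequence `c_n = b_n 2ⁿ/(1+2ⁿ)` with `b_n = i/(πn)` for `n ≠ 0`, `b_0 = 0`. -/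
noncomputable def cSeq (m : ℤ) : ℂ :=
  if m = 0 then 0 else (Complex.I / (Real.pi * m)) * ((2 : ℂ) ^ m / (1 + (2 : ℂ) ^ m))

noncomputable def aT (w : ℂ) (n : ℕ) : ℂ := w ^ n / n

noncomputable def tT (w : ℂ) (n : ℕ) : ℂ :=
  Complex.I / (Real.pi * (n + 1)) * ((w ^ (n + 1) + (w ^ (n + 1))⁻¹) / (1 + 2 ^ (n + 1)))

lemma sum_Icc_neg (F : ℤ → ℂ) (hF0 : F 0 = 0) (N : ℕ) :
    ∑ m ∈ Finset.Icc (-(N : ℤ)) (N : ℤ), F m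
      = ∑ n ∈ Finset.range N, (F ((n : ℤ) + 1) + F (-((n : ℤ) + 1))) := by
  induction N with
  | zero => simpa using hF0
  | succ N ih =>
    have h1 : Finset.Icc (-((N : ℤ) + 1)) ((N : ℤ) + 1)
        = insert (-((N : ℤ) + 1)) (insert ((N : ℤ) + 1) (Finset.Icc (-(N : ℤ)) (N : ℤ))) := by
      ext m; simp only [Finset.mem_Icc, Finset.mem_insert]; omega
    have h2 : -((N : ℤ) + 1) ∉ insert ((N : ℤ) + 1) (Finset.Icc (-(N : ℤ)) (N : ℤ)) := by
      simp only [Finset.mem_Icc, Finset.mem_insert]; omega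
    have h3 : ((N : ℤ) + 1) ∉ Finset.Icc (-(N : ℤ)) (N : ℤ) := by
      simp only [Finset.mem_Icc]; omega
    push_cast
    rw [h1, Finset.sum_insert h2, Finset.sum_insert h3, ih, Finset.sum_range_succ]
    ring

lemma pair_eq {w : ℂ} (hw : w ≠ 0) (n : ℕ) :
    cSeq ((n : ℤ) + 1) * w ^ ((n : ℤ) + 1) + cSeq (-((n : ℤ) + 1)) * w ^ (-((n : ℤ) + 1))
      = (Complex.I / Real.pi) * aT w (n + 1) - tT w n := by
  have hcast : ((n : ℤ) + 1) = ((n + 1 : ℕ) : ℤ) := by push_cast; ring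
  have hne : ((n : ℤ) + 1) ≠ 0 := by omega
  have hne' : -((n : ℤ) + 1) ≠ 0 := by omega
  have hπ : (Real.pi : ℂ) ≠ 0 := by
    exact_mod_cast Real.pi_ne_zero
  have hn1 : ((n : ℂ) + 1) ≠ 0 := by
    exact_mod_cast Nat.cast_add_one_ne_zero (R := ℂ) n
  have h2p : ((2 : ℂ) ^ (n + 1)) ≠ 0 := pow_ne_zero _ two_ne_zero
  have h12p : (1 + (2 : ℂ) ^ (n + 1)) ≠ 0 := by
    have h : ((1 : ℝ) + 2 ^ (n + 1)) ≠ 0 := by positivity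
    have : ((1 + (2:ℝ) ^ (n+1) : ℝ) : ℂ) = 1 + (2:ℂ) ^ (n+1) := by push_cast; ring
    rw [← this]
    exact_mod_cast h
  have hwp : w ^ (n + 1) ≠ 0 := pow_ne_zero _ hw
  rw [show (-((n : ℤ) + 1)) = -((n + 1 : ℕ) : ℤ) by omega, hcast]
  simp only [cSeq, hcast ▸ hne, if_neg (by omega : ¬ ((n+1:ℕ):ℤ) = 0),
    if_neg (by omega : ¬ (-((n+1:ℕ):ℤ)) = 0), zpow_natCast, zpow_neg, aT, tT]
  simp only [if_false]
  push_cast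
  set x := w ^ (n+1) with hx
  set P := (2:ℂ) ^ (n+1) with hP
  have h1Pinv : (1 + P⁻¹) ≠ 0 := fun h => h12p (by
    have h2 : P * (1 + P⁻¹) = 0 := by rw [h, mul_zero]
    rw [mul_add, mul_one, mul_inv_cancel₀ h2p] at h2
    linear_combination h2)
  have hkey : P⁻¹ / (1 + P⁻¹) = 1 / (1 + P) := by
    rw [div_eq_div_iff h1Pinv h12p]; field_simp; ring
  rw [mul_neg, div_neg, hkey]
  simp only [div_eq_mul_inv, mul_inv]
  linear_combination (Complex.I * (Real.pi : ℂ)⁻¹ * ((n : ℂ) + 1)⁻¹ * x) * inv_mul_cancel₀ h12p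

lemma geom_bound {w : ℂ} (hw1 : w ≠ 1) (hwn : ‖w‖ = 1) (n : ℕ) :
    ‖∑ i ∈ Finset.range n, w ^ (i + 1)‖ ≤ 2 / ‖1 - w‖ := by
  have h : ∑ i ∈ Finset.range n, w ^ (i + 1) = w * ((w ^ n - 1) / (w - 1)) := by
    rw [← geom_sum_eq hw1, Finset.mul_sum]
    exact Finset.sum_congr rfl fun i _ => pow_succ' w i
  rw [h, norm_mul, norm_div, hwn, one_mul, norm_sub_rev w 1]
  have hpos : 0 < ‖1 - w‖ := norm_pos_iff.mpr (sub_ne_zero.mpr (Ne.symm hw1))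
  have hbound : ‖w ^ n - 1‖ ≤ 2 := by
    calc ‖w ^ n - 1‖ ≤ ‖w ^ n‖ + ‖(1 : ℂ)‖ := norm_sub_le _ _
    _ = 2 := by rw [norm_pow, hwn]; norm_num
  exact div_le_div₀ (by norm_num) hbound hpos le_rfl

lemma aT_partial_tendsto {w : ℂ} (hw1 : w ≠ 1) (hwn : ‖w‖ = 1) :
    ∃ l : ℂ, Tendsto (fun N => ∑ i ∈ Finset.range N, aT w i) atTop (𝓝 l) := by
  have hanti : Antitone (fun i : ℕ => 1 / ((i : ℝ) + 1)) := by
    intro a b hab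
    apply one_div_le_one_div_of_le (by positivity)
    have : (a : ℝ) ≤ b := by exact_mod_cast hab
    linarith
  have h0 : Tendsto (fun i : ℕ => 1 / ((i : ℝ) + 1)) atTop (𝓝 0) :=
    tendsto_one_div_add_atTop_nhds_zero_nat
  have hc : CauchySeq (fun n => ∑ i ∈ Finset.range n, (1 / ((i : ℝ) + 1)) • w ^ (i + 1)) :=
    hanti.cauchySeq_series_mul_of_tendsto_zero_of_bounded h0 (geom_bound hw1 hwn)
  obtain ⟨l, hl⟩ := cauchySeq_tendsto_of_complete hc
  refine ⟨l, ?_⟩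
  have heq : ∀ N, ∑ i ∈ Finset.range (N + 1), aT w i
      = ∑ i ∈ Finset.range N, (1 / ((i : ℝ) + 1)) • w ^ (i + 1) := by
    intro N
    rw [Finset.sum_range_succ']
    have h0' : aT w 0 = 0 := by simp [aT]
    rw [h0', add_zero]
    refine Finset.sum_congr rfl fun i _ => ?_
    rw [aT, Complex.real_smul]
    push_cast
    ring
  rw [← tendsto_add_atTop_iff_nat 1]
  exact hl.congr fun N => (heq N).symm

lemma aT_limit {w : ℂ} (hw1 : w ≠ 1) (hwn : ‖w‖ = 1) (hre : 0 < (1 - w).re) {l : ℂ}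
    (hl : Tendsto (fun N => ∑ i ∈ Finset.range N, aT w i) atTop (𝓝 l)) :
    l = -Complex.log (1 - w) := by
  have habel := Complex.tendsto_tsum_powerSeries_nhdsWithin_lt hl
  rw [tendsto_map'_iff] at habel
  have hcont : Tendsto (fun x : ℝ => -Complex.log (1 - (x : ℂ) * w)) (𝓝[<] (1 : ℝ))
      (𝓝 (-Complex.log (1 - w))) := by
    have hca : ContinuousAt Complex.log (1 - w) := continuousAt_clog (Complex.mem_slitPlane_iff.mpr (Or.inl hre))
    have hmap : Tendsto (fun x : ℝ => 1 - (x : ℂ) * w) (𝓝[<] (1 : ℝ)) (𝓝 (1 - w)) := by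
      have hcts : Continuous (fun x : ℝ => 1 - (x : ℂ) * w) := by continuity
      have h1 : (fun x : ℝ => 1 - (x : ℂ) * w) 1 = 1 - w := by norm_num
      exact h1 ▸ (hcts.tendsto 1).mono_left nhdsWithin_le_nhds
    exact (hca.tendsto.comp hmap).neg
  have heq : (fun x : ℝ => -Complex.log (1 - (x : ℂ) * w)) =ᶠ[𝓝[<] (1 : ℝ)]
      ((fun z : ℂ => ∑' n, aT w n * z ^ n) ∘ Complex.ofReal) := by
    filter_upwards [Ioo_mem_nhdsLT (show (0 : ℝ) < 1 by norm_num)] with x hx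
    have hnorm : ‖(x : ℂ) * w‖ < 1 := by
      rw [norm_mul, hwn, mul_one, Complex.norm_real, Real.norm_eq_abs, abs_of_pos hx.1]
      exact hx.2
    have hsum := Complex.hasSum_taylorSeries_neg_log hnorm
    have h2 : (fun n : ℕ => ((x : ℂ) * w) ^ n / n) = fun n => aT w n * (x : ℂ) ^ n := by
      funext n; rw [aT, mul_pow]; ring
    rw [h2] at hsum
    exact (hsum.tsum_eq).symm
  exact tendsto_nhds_unique habel (Filter.Tendsto.congr' heq hcont)

lemma tT_norm_le {w : ℂ} (hwn : ‖w‖ = 1) (n : ℕ) :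
    ‖tT w n‖ ≤ (1 / Real.pi) * (1 / 2) ^ n := by
  have hπ := Real.pi_pos
  have hwp : ‖w ^ (n + 1)‖ = 1 := by rw [norm_pow, hwn, one_pow]
  have hwpinv : ‖(w ^ (n + 1))⁻¹‖ = 1 := by rw [norm_inv, hwp]; norm_num
  have e1 : (Real.pi : ℂ) * ((n : ℂ) + 1) = ((Real.pi * (n + 1) : ℝ) : ℂ) := by
    push_cast; ring
  have e2 : 1 + (2 : ℂ) ^ (n + 1) = (((1 + 2 ^ (n + 1) : ℝ)) : ℂ) := by push_cast; ring
  rw [tT, e1, e2, norm_mul, norm_div, norm_div, Complex.norm_I, Complex.norm_real,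
    Complex.norm_real, Real.norm_eq_abs, Real.norm_eq_abs, abs_of_pos (by positivity),
    abs_of_pos (by positivity)]
  have hnum : ‖w ^ (n + 1) + (w ^ (n + 1))⁻¹‖ ≤ 2 := by
    calc ‖w ^ (n + 1) + (w ^ (n + 1))⁻¹‖ ≤ ‖w ^ (n + 1)‖ + ‖(w ^ (n + 1))⁻¹‖ := norm_add_le _ _
    _ = 2 := by rw [hwp, hwpinv]; norm_num
  have h2 : (2 : ℝ) ^ (n + 1) ≤ 1 + 2 ^ (n + 1) := by linarith
  have step : 1 / (Real.pi * (n + 1)) * (‖w ^ (n + 1) + (w ^ (n + 1))⁻¹‖ / (1 + 2 ^ (n + 1)))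
      ≤ (1 / Real.pi) * (2 / 2 ^ (n + 1)) := by
    have ha : 1 / (Real.pi * ((n : ℝ) + 1)) ≤ 1 / Real.pi := by
      apply one_div_le_one_div_of_le hπ
      nlinarith [Nat.cast_nonneg (α := ℝ) n]
    have hb : ‖w ^ (n + 1) + (w ^ (n + 1))⁻¹‖ / (1 + 2 ^ (n + 1)) ≤ 2 / (2 : ℝ) ^ (n + 1) :=
      div_le_div₀ (by norm_num) hnum (by positivity) h2
    exact mul_le_mul ha hb (by positivity) (by positivity)
  calc 1 / (Real.pi * (↑n + 1)) * (‖w ^ (n + 1) + (w ^ (n + 1))⁻¹‖ / (1 + 2 ^ (n + 1)))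
      ≤ (1 / Real.pi) * (2 / 2 ^ (n + 1)) := step
  _ = (1 / Real.pi) * (1 / 2) ^ n := by
      rw [pow_succ]
      field_simp
      rw [← mul_pow]; norm_num

lemma tT_summable {w : ℂ} (hwn : ‖w‖ = 1) : Summable (tT w) :=
  Summable.of_norm_bounded
    ((summable_geometric_of_lt_one (by norm_num) (by norm_num)).mul_left (1 / Real.pi))
    (tT_norm_le hwn)

lemma tT_tsum_norm {w : ℂ} (hwn : ‖w‖ = 1) : ‖∑' n, tT w n‖ ≤ 2 / Real.pi := by
  have hsumm : Summable fun n : ℕ => (1 / Real.pi) * (1 / 2 : ℝ) ^ n :=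
    (summable_geometric_of_lt_one (by norm_num) (by norm_num)).mul_left (1 / Real.pi)
  have hnorms : Summable fun n => ‖tT w n‖ :=
    Summable.of_nonneg_of_le (fun _ => norm_nonneg _) (tT_norm_le hwn) hsumm
  have h1 : ‖∑' n, tT w n‖ ≤ ∑' n, ‖tT w n‖ := norm_tsum_le_tsum_norm hnorms
  have h2 : ∑' n, ‖tT w n‖ ≤ ∑' n : ℕ, (1 / Real.pi) * (1 / 2 : ℝ) ^ n :=
    Summable.tsum_le_tsum (tT_norm_le hwn) hnorms hsumm
  have h3 : ∑' n : ℕ, (1 / Real.pi) * (1 / 2 : ℝ) ^ n = 2 / Real.pi := by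
    rw [tsum_mul_left, tsum_geometric_of_lt_one (by norm_num) (by norm_num)]
    norm_num
    ring
  linarith

lemma key_decomp {θ : ℝ} (hθ : θ ∈ Ioo (0 : ℝ) (2 * Real.pi)) {G : ℂ}
    (hG : Tendsto (fun N : ℕ =>
        ∑ m ∈ Finset.Icc (-(N : ℤ)) (N : ℤ), cSeq m * Complex.exp (m * θ * Complex.I))
      atTop (𝓝 G)) :
    ∃ e : ℂ, ‖e‖ ≤ 3 ∧
      G = -(Complex.I / Real.pi) * (Real.log (Real.sin (θ / 2)) : ℂ) + e := by
  obtain ⟨hθ0, hθ2⟩ := hθ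
  have hπpos := Real.pi_pos
  set w : ℂ := Complex.exp (θ * Complex.I) with hw
  have hw0 : w ≠ 0 := Complex.exp_ne_zero _
  have hwn : ‖w‖ = 1 := by
    rw [hw]; exact Complex.norm_exp_ofReal_mul_I θ
  have hkne : ∀ k : ℤ, (k : ℝ) * (2 * Real.pi) ≠ θ := by
    intro k hk
    have h1 : 0 < (k : ℝ) * (2 * Real.pi) := hk ▸ hθ0
    have hk0 : 0 < (k : ℝ) := by nlinarith
    have hkz : (0 : ℤ) < k := by exact_mod_cast hk0
    have hk1 : (1 : ℝ) ≤ (k : ℝ) := by exact_mod_cast hkz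
    nlinarith
  have hw1 : w ≠ 1 := by
    intro h
    rw [hw, Complex.exp_eq_one_iff] at h
    obtain ⟨k, hk⟩ := h
    have h2 : (θ : ℂ) * Complex.I = ((k * (2 * Real.pi) : ℝ) : ℂ) * Complex.I := by
      rw [hk]; push_cast; ring
    have h3 : (θ : ℂ) = ((k * (2 * Real.pi) : ℝ) : ℂ) :=
      mul_right_cancel₀ Complex.I_ne_zero h2
    exact hkne k (by exact_mod_cast h3.symm)
  have hcos : Real.cos θ < 1 := by
    rcases lt_or_eq_of_le (Real.cos_le_one θ) with h | h
    · exact h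
    · exact absurd ((Real.cos_eq_one_iff θ).mp h) (by simpa using fun k => hkne k)
  have hre : 0 < (1 - w).re := by
    have hwre : w.re = Real.cos θ := Complex.exp_ofReal_mul_I_re θ
    simp only [Complex.sub_re, Complex.one_re, hwre]
    linarith
  obtain ⟨l, hl⟩ := aT_partial_tendsto hw1 hwn
  have hlval := aT_limit hw1 hwn hre hl
  have hSsum := tT_summable hwn
  set S : ℂ := ∑' n, tT w n with hSdef
  have hexp : ∀ m : ℤ, Complex.exp (m * θ * Complex.I) = w ^ m := fun m => by
    rw [mul_assoc]; exact Complex.exp_int_mul _ m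
  have hrew : ∀ N : ℕ,
      ∑ m ∈ Finset.Icc (-(N : ℤ)) (N : ℤ), cSeq m * Complex.exp (m * θ * Complex.I)
        = (Complex.I / Real.pi) * (∑ i ∈ Finset.range (N + 1), aT w i)
          - ∑ n ∈ Finset.range N, tT w n := by
    intro N
    rw [sum_Icc_neg _ (by simp [cSeq]) N]
    have hterm : ∀ n ∈ Finset.range N,
        cSeq ((n : ℤ) + 1) * Complex.exp (((((n : ℤ) + 1) : ℤ) : ℂ) * θ * Complex.I)
          + cSeq (-((n : ℤ) + 1)) * Complex.exp ((((-((n : ℤ) + 1)) : ℤ) : ℂ) * θ * Complex.I)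
        = (Complex.I / Real.pi) * aT w (n + 1) - tT w n := by
      intro n _
      rw [hexp (((n : ℤ) + 1)), hexp (-((n : ℤ) + 1))]
      exact pair_eq hw0 n
    rw [Finset.sum_congr rfl hterm, Finset.sum_sub_distrib, ← Finset.mul_sum]
    congr 1
    rw [Finset.sum_range_succ']
    have : aT w 0 = 0 := by simp [aT]
    rw [this, add_zero]
  have T1 : Tendsto (fun N : ℕ => ∑ i ∈ Finset.range (N + 1), aT w i) atTop (𝓝 l) :=
    hl.comp (tendsto_add_atTop_nat 1)
  have T2 : Tendsto (fun N : ℕ => ∑ n ∈ Finset.range N, tT w n) atTop (𝓝 S) :=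
    hSsum.hasSum.tendsto_sum_nat
  have hTend : Tendsto (fun N : ℕ =>
      ∑ m ∈ Finset.Icc (-(N : ℤ)) (N : ℤ), cSeq m * Complex.exp (m * θ * Complex.I))
      atTop (𝓝 ((Complex.I / Real.pi) * l - S)) :=
    ((T1.const_mul (Complex.I / Real.pi)).sub T2).congr fun N => (hrew N).symm
  have hGeq : G = (Complex.I / Real.pi) * l - S := tendsto_nhds_unique hG hTend
  -- log decomposition
  have hhalf1 : 0 < θ / 2 := by linarith
  have hhalf2 : θ / 2 < Real.pi := by linarith
  have hsin : 0 < Real.sin (θ / 2) := Real.sin_pos_of_pos_of_lt_pi hhalf1 hhalf2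
  have hfact : 1 - w = -Complex.exp (((θ / 2 : ℝ) : ℂ) * Complex.I)
      * (2 * Complex.I * Complex.sin ((θ / 2 : ℝ) : ℂ)) := by
    rw [Complex.sin]
    have e1 : Complex.exp (((θ / 2 : ℝ) : ℂ) * Complex.I)
        * Complex.exp (((θ / 2 : ℝ) : ℂ) * Complex.I) = w := by
      rw [← Complex.exp_add]; congr 1; push_cast; ring
    have e2 : Complex.exp (((θ / 2 : ℝ) : ℂ) * Complex.I)
        * Complex.exp (-((θ / 2 : ℝ) : ℂ) * Complex.I) = 1 := by
      rw [← Complex.exp_add,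
        show ((θ / 2 : ℝ) : ℂ) * Complex.I + -((θ / 2 : ℝ) : ℂ) * Complex.I = 0 by ring,
        Complex.exp_zero]
    linear_combination (-(Complex.I ^ 2)) * e1 + (Complex.I ^ 2) * e2
      + (1 - w) * Complex.I_sq
  have habs : ‖1 - w‖ = 2 * Real.sin (θ / 2) := by
    rw [hfact]
    rw [norm_mul, norm_mul, norm_neg, norm_mul, Complex.norm_exp_ofReal_mul_I,
      Complex.norm_I, ← Complex.ofReal_sin, Complex.norm_real, Real.norm_eq_abs, abs_of_pos hsin]
    norm_num
  have hlog : Complex.log (1 - w)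
      = ((Real.log 2 + Real.log (Real.sin (θ / 2)) : ℝ) : ℂ)
        + ((Complex.arg (1 - w) : ℝ) : ℂ) * Complex.I := by
    rw [Complex.log, habs, Real.log_mul two_ne_zero (ne_of_gt hsin)]
  refine ⟨-(Complex.I / Real.pi) * (((Real.log 2 : ℝ) : ℂ)
      + ((Complex.arg (1 - w) : ℝ) : ℂ) * Complex.I) - S, ?_, ?_⟩
  · have hlog2pos : (0 : ℝ) ≤ Real.log 2 := Real.log_nonneg one_le_two
    have hn1 : ‖-(Complex.I / (Real.pi : ℂ)) * (((Real.log 2 : ℝ) : ℂ)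
        + ((Complex.arg (1 - w) : ℝ) : ℂ) * Complex.I)‖
        ≤ (1 / Real.pi) * (Real.log 2 + Real.pi) := by
      rw [norm_mul, norm_neg, norm_div, Complex.norm_I, Complex.norm_real, Real.norm_eq_abs,
        abs_of_pos hπpos]
      have hb : ‖(((Real.log 2 : ℝ) : ℂ) + ((Complex.arg (1 - w) : ℝ) : ℂ) * Complex.I)‖
          ≤ Real.log 2 + Real.pi := by
        calc ‖(((Real.log 2 : ℝ) : ℂ) + ((Complex.arg (1 - w) : ℝ) : ℂ) * Complex.I)‖
            ≤ ‖(((Real.log 2 : ℝ) : ℂ))‖ + ‖((Complex.arg (1 - w) : ℝ) : ℂ) * Complex.I‖ :=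
              norm_add_le _ _
        _ = |Real.log 2| + |Complex.arg (1 - w)| := by
              rw [norm_mul, Complex.norm_I, mul_one, Complex.norm_real, Complex.norm_real,
                Real.norm_eq_abs, Real.norm_eq_abs]
        _ ≤ Real.log 2 + Real.pi := by
              rw [abs_of_nonneg hlog2pos]
              exact add_le_add le_rfl (Complex.abs_arg_le_pi _)
      exact mul_le_mul_of_nonneg_left hb (by positivity)
    have hn2 : ‖S‖ ≤ 2 / Real.pi := tT_tsum_norm hwn
    refine le_trans (norm_sub_le _ _) (le_trans (add_le_add hn1 hn2) ?_)
    have heq2 : (1 / Real.pi) * (Real.log 2 + Real.pi) + 2 / Real.pi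
        = (Real.log 2 + Real.pi + 2) / Real.pi := by
      field_simp
    rw [heq2, div_le_iff₀ hπpos]
    have hl2 : Real.log 2 < 0.6931471808 := Real.log_two_lt_d9
    nlinarith [Real.pi_gt_three]
  · rw [hGeq, hlval, hlog]
    push_cast
    ring

/-- If `g` is the sum of the Fourier series `∑_{n∈ℤ} c_n e^{inθ}` on `(0, 2π)`, then `g` is
not bounded there; in fact `g(θ) ∼ −(i/π) ln|sin(θ/2)|` as `θ → 0⁺`, so `ĉ ∉ L^∞`. -/
theorem cSeq_symbol_unbounded (g : ℝ → ℂ)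
    (hg : ∀ θ ∈ Ioo (0 : ℝ) (2 * Real.pi),
      Tendsto (fun N : ℕ =>
          ∑ m ∈ Finset.Icc (-(N : ℤ)) (N : ℤ), cSeq m * Complex.exp (m * θ * Complex.I))
        atTop (nhds (g θ))) :
    (¬ ∃ M : ℝ, ∀ θ ∈ Ioo (0 : ℝ) (2 * Real.pi), ‖g θ‖ ≤ M) ∧
    Tendsto (fun θ : ℝ =>
        g θ / (-(Complex.I / Real.pi) * (Real.log |Real.sin (θ / 2)| : ℂ)))
      (nhdsWithin 0 (Ioi (0 : ℝ))) (nhds 1) := by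
  have hπ := Real.pi_pos
  set D : ℝ → ℂ := fun θ => -(Complex.I / Real.pi) * (Real.log |Real.sin (θ / 2)| : ℂ) with hD
  have hsmall : ∀ θ ∈ Ioo (0 : ℝ) 1, θ ∈ Ioo (0 : ℝ) (2 * Real.pi)
      ∧ 0 < Real.sin (θ / 2) ∧ Real.sin (θ / 2) < 1 := by
    intro θ hθ
    have h2π : (1 : ℝ) < 2 * Real.pi := by nlinarith [Real.pi_gt_three]
    refine ⟨⟨hθ.1, lt_trans hθ.2 h2π⟩, ?_, ?_⟩
    · exact Real.sin_pos_of_pos_of_lt_pi (by linarith [hθ.1]) (by nlinarith [Real.pi_gt_three, hθ.2])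
    · exact lt_trans (Real.sin_lt (by linarith [hθ.1])) (by linarith [hθ.2])
  have hIoo : Ioo (0 : ℝ) 1 ∈ 𝓝[>] (0 : ℝ) := Ioo_mem_nhdsGT one_pos
  have hfacts : ∀ θ ∈ Ioo (0 : ℝ) 1, Real.log |Real.sin (θ / 2)| < 0
      ∧ ‖D θ‖ = -(Real.log |Real.sin (θ / 2)|) / Real.pi := by
    intro θ hθ
    obtain ⟨hmem, hs, hlt⟩ := hsmall θ hθ
    have hL : Real.log |Real.sin (θ / 2)| < 0 := by
      rw [abs_of_pos hs]; exact Real.log_neg hs hlt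
    refine ⟨hL, ?_⟩
    rw [hD]
    simp only
    rw [norm_mul, norm_neg, norm_div, Complex.norm_I, Complex.norm_real, Complex.norm_real,
      Real.norm_eq_abs, Real.norm_eq_abs, abs_of_pos hπ, abs_of_neg hL]
    ring
  have hLbot : Tendsto (fun θ : ℝ => Real.log |Real.sin (θ / 2)|) (𝓝[>] (0 : ℝ)) atBot := by
    apply Real.tendsto_log_nhdsGT_zero.comp
    rw [tendsto_nhdsWithin_iff]
    constructor
    · have hc : Continuous fun θ : ℝ => |Real.sin (θ / 2)| :=
        (Real.continuous_sin.comp (continuous_id.div_const 2)).abs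
      have h1 : Tendsto (fun θ : ℝ => |Real.sin (θ / 2)|) (𝓝 0) (𝓝 |Real.sin ((0 : ℝ) / 2)|) :=
        hc.tendsto 0
      rw [show |Real.sin ((0 : ℝ) / 2)| = 0 by norm_num] at h1
      exact h1.mono_left nhdsWithin_le_nhds
    · filter_upwards [hIoo] with θ hθ
      exact mem_Ioi.mpr (abs_pos.mpr (ne_of_gt (hsmall θ hθ).2.1))
  have hr : Tendsto (fun θ : ℝ => g θ / D θ - 1) (𝓝[>] (0 : ℝ)) (𝓝 0) := by
    apply squeeze_zero_norm'
      (a := fun θ : ℝ => 3 * Real.pi / (-(Real.log |Real.sin (θ / 2)|)))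
    · filter_upwards [hIoo] with θ hθ
      obtain ⟨hmem, hs, hlt⟩ := hsmall θ hθ
      obtain ⟨hL, hDnorm⟩ := hfacts θ hθ
      obtain ⟨e, he3, heq⟩ := key_decomp hmem (hg θ hmem)
      have hDne : D θ ≠ 0 := by
        rw [hD]
        simp only
        apply mul_ne_zero
        · exact neg_ne_zero.mpr (div_ne_zero Complex.I_ne_zero
            (by exact_mod_cast Real.pi_ne_zero))
        · exact_mod_cast ne_of_lt hL
      have hgD : g θ = D θ + e := by
        rw [heq, hD]
        simp only [abs_of_pos hs]
      have hgd : g θ / D θ - 1 = e / D θ := by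
        rw [hgD]; field_simp; ring
      rw [hgd, norm_div, hDnorm, div_div_eq_mul_div]
      have hLpos : 0 < -(Real.log |Real.sin (θ / 2)|) := by linarith
      exact div_le_div₀ (by positivity) (by nlinarith) hLpos le_rfl
    · exact Tendsto.div_atTop tendsto_const_nhds (tendsto_neg_atBot_atTop.comp hLbot)
  have h2 : Tendsto (fun θ : ℝ => g θ / D θ) (𝓝[>] (0 : ℝ)) (𝓝 1) := by
    have h := (tendsto_const_nhds (x := (1:ℂ)) (f := 𝓝[>] (0:ℝ))).add hr
    rw [add_zero] at h
    exact h.congr fun θ => by ring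
  refine ⟨?_, h2⟩
  rintro ⟨M, hM⟩
  have hDnormTop : Tendsto (fun θ => ‖D θ‖) (𝓝[>] (0 : ℝ)) atTop := by
    have hT : Tendsto (fun θ : ℝ => -(Real.log |Real.sin (θ / 2)|) / Real.pi)
        (𝓝[>] (0 : ℝ)) atTop := (tendsto_neg_atBot_atTop.comp hLbot).atTop_div_const hπ
    apply Filter.Tendsto.congr' ?_ hT
    filter_upwards [hIoo] with θ hθ
    exact ((hfacts θ hθ).2).symm
  have ev1 : ∀ᶠ θ in 𝓝[>] (0 : ℝ), 1 / 2 < ‖g θ / D θ‖ :=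
    (h2.norm).eventually (eventually_gt_nhds (by norm_num))
  have ev2 : ∀ᶠ θ in 𝓝[>] (0 : ℝ), 2 * (|M| + 1) < ‖D θ‖ :=
    hDnormTop.eventually_gt_atTop _
  obtain ⟨θ, ⟨hgd, hDb⟩, hθI⟩ := ((ev1.and ev2).and (eventually_mem_set.mpr hIoo)).exists
  have hmem := (hsmall θ hθI).1
  have hgM := hM θ hmem
  have hDne : D θ ≠ 0 := by
    intro h
    rw [h, norm_zero] at hDb
    nlinarith [abs_nonneg M]
  have hfac : ‖g θ‖ = ‖g θ / D θ‖ * ‖D θ‖ := by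
    rw [← norm_mul, div_mul_cancel₀ _ hDne]
  nlinarith [le_abs_self M, abs_nonneg M, norm_nonneg (g θ), norm_nonneg (D θ),
    norm_nonneg (g θ / D θ)]
end

section
/- Carleson embedding inequality: let μ be a Carleson measure on ℝⁿ × (0,∞) with norm ‖μ‖_c, and let P_t f(x) = ∫ P_t(x,y) f(y) dy with kernel satisfying 0 ≤ |P_t(x,y)| ≤ t^{−n} 𝟙_{|x−y|≤t}. Then for all f ∈ L²(ℝⁿ): ∫₀^∞ ∫_{ℝⁿ} |P_t f(x)|² dμ(x,t) ≤ C_n ‖μ‖_c ‖f‖₂², where C_n depends only on n. -/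
open MeasureTheory Set
open scoped ENNReal NNReal

lemma closedBall_subset_cube {n : ℕ} (c : Fin n → ℝ) {r : ℝ} (hr : 0 ≤ r) :
    Metric.closedBall c r ⊆ cube n (fun i => c i - r) (2 * r) := by
  intro y hy i
  have h1 : dist (y i) (c i) ≤ dist y c := dist_le_pi_dist y c i
  have h2 : dist y c ≤ r := hy
  rw [Real.dist_eq] at h1
  have h3 := abs_le.1 (h1.trans h2)
  show c i - r ≤ y i ∧ y i ≤ c i - r + 2 * r
  exact ⟨by linarith [h3.1], by linarith [h3.2]⟩

lemma weak_bound (n : ℕ) (μ : Measure ((Fin n → ℝ) × ℝ)) (Cc : ℝ) (hCc : 0 ≤ Cc)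
    (hCar : ∀ (a : Fin n → ℝ) (l : ℝ), 0 < l →
      μ ((cube n a l) ×ˢ Ioc (0 : ℝ) l) ≤ ENNReal.ofReal (Cc * l ^ n))
    (g : (Fin n → ℝ) → ℝ≥0∞) (hg : Measurable g) (hgfin : ∫⁻ y, g y ≠ ⊤)
    (α : ℝ≥0∞) (hα0 : α ≠ 0) (hαtop : α ≠ ⊤) :
    μ {p : (Fin n → ℝ) × ℝ | 0 < p.2 ∧
        α * ENNReal.ofReal ((2 * p.2) ^ n) < ∫⁻ y in Metric.closedBall p.1 p.2, g y}
      ≤ ENNReal.ofReal (3 ^ n * Cc) * (α⁻¹ * ∫⁻ y, g y) := by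
  set E : Set ((Fin n → ℝ) × ℝ) := {p | 0 < p.2 ∧
      α * ENNReal.ofReal ((2 * p.2) ^ n) < ∫⁻ y in Metric.closedBall p.1 p.2, g y} with hE
  by_cases hn : n = 0
  · subst hn
    rcases E.eq_empty_or_nonempty with h | ⟨p₀, hp₀⟩
    · simp [h]
    · have hαle : α ≤ ∫⁻ y, g y := by
        have h1 := hp₀.2
        simp only [pow_zero, ENNReal.ofReal_one, mul_one] at h1
        exact (h1.trans_le (setLIntegral_le_lintegral _ _)).le
      have hsub : E ⊆ ⋃ k : ℕ, (cube 0 (fun _ => 0) ((k : ℝ) + 1)) ×ˢ Ioc (0:ℝ) ((k:ℝ)+1) := by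
        intro p hp
        obtain ⟨k, hk⟩ := exists_nat_ge p.2
        exact mem_iUnion.2 ⟨k, ⟨fun i => i.elim0, hp.1, hk.trans (by linarith)⟩⟩
      have hdir : Directed (· ⊆ ·) (fun k : ℕ =>
          (cube 0 (fun _ => 0) ((k : ℝ) + 1)) ×ˢ Ioc (0:ℝ) ((k:ℝ)+1)) := by
        apply Monotone.directed_le
        intro k m hkm
        exact prod_mono (fun x hx i => i.elim0)
          (Ioc_subset_Ioc_right (by exact_mod_cast add_le_add_left (Nat.cast_le.2 hkm) 1))
      calc μ E ≤ μ (⋃ k : ℕ, (cube 0 (fun _ => 0) ((k : ℝ) + 1)) ×ˢ Ioc (0:ℝ) ((k:ℝ)+1)) :=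
            measure_mono hsub
        _ = ⨆ k : ℕ, μ ((cube 0 (fun _ => 0) ((k : ℝ) + 1)) ×ˢ Ioc (0:ℝ) ((k:ℝ)+1)) :=
            hdir.measure_iUnion
        _ ≤ ENNReal.ofReal Cc := by
            refine iSup_le fun k => ?_
            have := hCar (fun _ => 0) ((k:ℝ)+1) (by positivity)
            simpa using this
        _ ≤ ENNReal.ofReal (3 ^ 0 * Cc) * (α⁻¹ * ∫⁻ y, g y) := by
            rw [pow_zero, one_mul]
            refine le_mul_of_one_le_right zero_le ?_
            calc (1:ℝ≥0∞) = α⁻¹ * α := (ENNReal.inv_mul_cancel hα0 hαtop).symm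
              _ ≤ α⁻¹ * ∫⁻ y, g y := mul_le_mul_right hαle _
  · -- n ≥ 1
    set B : ((Fin n → ℝ) × ℝ) → Set (Fin n → ℝ) := fun p => Metric.closedBall p.1 p.2 with hB
    set K : ℝ := ((∫⁻ y, g y) / α).toReal with hK
    have hRbound : ∀ p ∈ E, p.2 ≤ max 1 K := by
      intro p hp
      have h1 : ENNReal.ofReal ((2 * p.2) ^ n) * α < ∫⁻ y, g y := by
        rw [mul_comm]
        exact hp.2.trans_le (setLIntegral_le_lintegral _ _)
      have h2 : ENNReal.ofReal ((2 * p.2) ^ n) < (∫⁻ y, g y) / α :=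
        (ENNReal.lt_div_iff_mul_lt (Or.inl hα0) (Or.inl hαtop)).2 h1
      have h3 : (2 * p.2) ^ n ≤ K := by
        rw [hK]
        have hfin : (∫⁻ y, g y) / α ≠ ⊤ :=
          (ENNReal.div_lt_top hgfin hα0).ne
        have := ENNReal.toReal_mono hfin h2.le
        rwa [ENNReal.toReal_ofReal (pow_nonneg (by linarith [hp.1]) n)] at this
      rcases le_total (2 * p.2) 1 with h | h
      · exact le_max_of_le_left (by linarith [hp.1])
      · refine le_max_of_le_right ?_
        calc p.2 ≤ 2 * p.2 := by linarith [hp.1]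
          _ ≤ (2 * p.2) ^ n := le_self_pow₀ h hn
          _ ≤ K := h3
    obtain ⟨u, huE, hudisj, hucov⟩ :=
      Vitali.exists_disjoint_subfamily_covering_enlargement B E (fun p => p.2) 2
        one_lt_two (fun p hp => hp.1.le) (max 1 K) hRbound
        (fun p hp => ⟨p.1, Metric.mem_closedBall_self hp.1.le⟩)
    have hupos : ∀ b ∈ u, 0 < b.2 := fun b hb => (huE hb).1
    have hucount : u.Countable := by
      have h1 : Pairwise (Function.onFun Disjoint fun b : u => B b) := by
        intro i j hij
        exact hudisj i.2 j.2 (Subtype.coe_injective.ne hij)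
      have h2 : ∀ b : u, MeasurableSet (B b) := fun b => Metric.isClosed_closedBall.measurableSet
      have h3 := MeasureTheory.Measure.countable_meas_pos_of_disjoint_iUnion
        (μ := (volume : Measure (Fin n → ℝ))) h2 h1
      have h4 : {i : u | 0 < volume (B i)} = univ := by
        refine eq_univ_of_forall fun b => ?_
        exact Metric.measure_closedBall_pos _ _ (hupos b b.2)
      rw [h4] at h3
      exact Set.countable_coe_iff.mp (Set.countable_univ_iff.mp h3)
    set ν : Measure (Fin n → ℝ) := volume.withDensity g with hν
    have hνball : ∀ b : (Fin n → ℝ) × ℝ, ν (B b) = ∫⁻ y in B b, g y :=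
      fun b => withDensity_apply g Metric.isClosed_closedBall.measurableSet
    have hcover : E ⊆ ⋃ b ∈ u,
        (cube n (fun i => b.1 i - 3 * b.2) (6 * b.2)) ×ˢ Ioc (0:ℝ) (6 * b.2) := by
      intro a ha
      obtain ⟨b, hbu, ⟨z, hza, hzb⟩, hab⟩ := hucov a ha
      have hb2 : 0 < b.2 := hupos b hbu
      refine mem_biUnion hbu ⟨?_, ha.1, by linarith⟩
      have hdist : dist a.1 b.1 ≤ 3 * b.2 := by
        calc dist a.1 b.1 ≤ dist a.1 z + dist z b.1 := dist_triangle _ _ _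
          _ ≤ a.2 + b.2 := add_le_add (dist_comm a.1 z ▸ hza) hzb
          _ ≤ 3 * b.2 := by linarith
      have := closedBall_subset_cube b.1 (by linarith : (0:ℝ) ≤ 3 * b.2) hdist
      convert this using 2
      ring
    have hterm : ∀ b ∈ u,
        μ ((cube n (fun i => b.1 i - 3 * b.2) (6 * b.2)) ×ˢ Ioc (0:ℝ) (6 * b.2))
          ≤ ENNReal.ofReal (3 ^ n * Cc) * (α⁻¹ * ν (B b)) := by
      intro b hbu
      have hb2 : 0 < b.2 := hupos b hbu
      calc μ ((cube n (fun i => b.1 i - 3 * b.2) (6 * b.2)) ×ˢ Ioc (0:ℝ) (6 * b.2))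
          ≤ ENNReal.ofReal (Cc * (6 * b.2) ^ n) := hCar _ _ (by linarith)
        _ = ENNReal.ofReal (3 ^ n * Cc) * ENNReal.ofReal ((2 * b.2) ^ n) := by
            rw [← ENNReal.ofReal_mul (by positivity)]
            congr 1
            rw [show (6:ℝ) * b.2 = 3 * (2 * b.2) by ring, mul_pow]
            ring
        _ ≤ ENNReal.ofReal (3 ^ n * Cc) * (α⁻¹ * ν (B b)) := by
            refine mul_le_mul_right ?_ _
            have h1 : α * ENNReal.ofReal ((2 * b.2) ^ n) ≤ ν (B b) := by
              rw [hνball]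
              exact ((huE hbu).2).le
            calc ENNReal.ofReal ((2 * b.2) ^ n)
                = α⁻¹ * (α * ENNReal.ofReal ((2 * b.2) ^ n)) := by
                  rw [← mul_assoc, ENNReal.inv_mul_cancel hα0 hαtop, one_mul]
              _ ≤ α⁻¹ * ν (B b) := mul_le_mul_right h1 _
    calc μ E ≤ μ (⋃ b ∈ u,
          (cube n (fun i => b.1 i - 3 * b.2) (6 * b.2)) ×ˢ Ioc (0:ℝ) (6 * b.2)) :=
        measure_mono hcover
      _ ≤ ∑' b : u, μ ((cube n (fun i => b.1.1 i - 3 * b.1.2) (6 * b.1.2)) ×ˢ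
            Ioc (0:ℝ) (6 * b.1.2)) := measure_biUnion_le μ hucount _
      _ ≤ ∑' b : u, ENNReal.ofReal (3 ^ n * Cc) * (α⁻¹ * ν (B b)) :=
          ENNReal.tsum_le_tsum fun b => hterm b b.2
      _ = ENNReal.ofReal (3 ^ n * Cc) * α⁻¹ * ∑' b : u, ν (B b) := by
          simp_rw [← mul_assoc]
          exact ENNReal.tsum_mul_left
      _ ≤ ENNReal.ofReal (3 ^ n * Cc) * α⁻¹ * ν univ := by
          refine mul_le_mul_right ?_ _
          rw [← measure_biUnion hucount hudisj
            (fun b _ => Metric.isClosed_closedBall.measurableSet)]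
          exact measure_mono (subset_univ _)
      _ = ENNReal.ofReal (3 ^ n * Cc) * (α⁻¹ * ∫⁻ y, g y) := by
          rw [mul_assoc]
          congr 1
          congr 1
          rw [hν, withDensity_apply g MeasurableSet.univ, Measure.restrict_univ]
lemma integral_two_mul_eq_sq (x : ℝ) : (∫ t in (0:ℝ)..x, 2*t) = x^2 := by
  rw [intervalIntegral.integral_const_mul, integral_id]
  ring

lemma ennreal_le_one_add_sq (x : ℝ≥0∞) : x ≤ 1 + x ^ 2 := by
  rcases le_total x 1 with h | h
  · exact h.trans le_self_add
  · calc x = x * 1 := (mul_one x).symm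
      _ ≤ x * x := mul_le_mul_right h _
      _ ≤ 1 + x ^ 2 := by rw [← sq]; exact le_add_self

/-- Carleson embedding inequality: if `μ` is a Carleson measure on `ℝⁿ × (0,∞)` with norm at
most `Cc`, and `P_t` has a kernel bounded by `t^{−n} 𝟙_{dist(x,y)≤t}`, then
`∫∫ |P_t f(x)|² dμ ≤ C_n Cc ‖f‖₂²`, with `C_n` depending only on `n`. -/
theorem carleson_embedding (n : ℕ) :
    ∃ Cn : ℝ, 0 < Cn ∧
      ∀ (μ : Measure ((Fin n → ℝ) × ℝ)) (Cc : ℝ), 0 ≤ Cc →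
        (∀ (a : Fin n → ℝ) (l : ℝ), 0 < l →
          μ ((cube n a l) ×ˢ Ioc (0 : ℝ) l) ≤ ENNReal.ofReal (Cc * l ^ n)) →
        μ {p : (Fin n → ℝ) × ℝ | p.2 ≤ 0} = 0 →
        ∀ P : ℝ → (Fin n → ℝ) → (Fin n → ℝ) → ℂ,
          (∀ t : ℝ, Measurable (Function.uncurry (P t))) →
          (∀ (t : ℝ) (x y : Fin n → ℝ), 0 < t → ‖P t x y‖ ≤ (t ^ n)⁻¹) →
          (∀ (t : ℝ) (x y : Fin n → ℝ), 0 < t → t < dist x y → P t x y = 0) →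
          ∀ f : (Fin n → ℝ) → ℂ, Measurable f →
            ∫⁻ p : (Fin n → ℝ) × ℝ, ENNReal.ofReal (‖∫ y, P p.2 p.1 y * f y‖ ^ 2) ∂μ ≤
              ENNReal.ofReal (Cn * Cc) * ∫⁻ x, ENNReal.ofReal (‖f x‖ ^ 2) := by
  refine ⟨8 * 12 ^ n + 1, by positivity, ?_⟩
  intro μ Cc hCc hCar hnull P hPmeas hPbound hPsupp f hf
  by_cases hftop : (∫⁻ x, ENNReal.ofReal (‖f x‖ ^ 2)) = ⊤
  · by_cases hCc0 : Cc = 0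
    · subst hCc0
      have hpos : μ {p : (Fin n → ℝ) × ℝ | 0 < p.2} = 0 := by
        have hsub : {p : (Fin n → ℝ) × ℝ | 0 < p.2} ⊆
            ⋃ k : ℕ, (cube n (fun _ => -((k:ℝ)+1)) (2*((k:ℝ)+1))) ×ˢ Ioc (0:ℝ) (2*((k:ℝ)+1)) := by
          intro p hp
          obtain ⟨k, hk⟩ := exists_nat_ge (max ‖p.1‖ p.2)
          refine mem_iUnion.2 ⟨k, ⟨?_, hp, ?_⟩⟩
          · intro i
            have h1 : ‖p.1 i‖ ≤ ‖p.1‖ := norm_le_pi_norm p.1 i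
            rw [Real.norm_eq_abs] at h1
            have h2 : ‖p.1‖ ≤ (k:ℝ) := (le_max_left _ _).trans hk
            have h3 := abs_le.1 (h1.trans h2)
            constructor
            · show -((k:ℝ)+1) ≤ p.1 i; linarith [h3.1]
            · show p.1 i ≤ -((k:ℝ)+1) + 2*((k:ℝ)+1); linarith [h3.2]
          · have : p.2 ≤ (k:ℝ) := (le_max_right _ _).trans hk
            linarith
        refine measure_mono_null hsub (measure_iUnion_null fun k => ?_)
        have := hCar (fun _ => -((k:ℝ)+1)) (2*((k:ℝ)+1)) (by positivity)
        simpa using this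
      have hμ0 : μ = 0 := by
        have huniv : μ univ = 0 := by
          have h1 : μ univ ≤ μ {p : (Fin n → ℝ) × ℝ | p.2 ≤ 0} +
              μ {p : (Fin n → ℝ) × ℝ | 0 < p.2} := by
            refine (measure_mono ?_).trans (measure_union_le _ _)
            intro p _
            rcases le_or_gt p.2 0 with h | h
            · exact Or.inl h
            · exact Or.inr h
          rw [hnull, hpos, add_zero] at h1
          exact le_antisymm h1 zero_le
        exact Measure.measure_univ_eq_zero.mp huniv
      rw [hμ0]
      simp
    · have hne : ENNReal.ofReal ((8 * 12 ^ n + 1) * Cc) ≠ 0 := by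
        have : (0:ℝ) < Cc := lt_of_le_of_ne hCc (Ne.symm hCc0)
        simp only [ne_eq, ENNReal.ofReal_eq_zero, not_le]
        positivity
      rw [hftop, ENNReal.mul_top hne]
      exact le_top
  · -- main case : f ∈ L²
    set T2 : ℝ≥0∞ := ∫⁻ x, ENNReal.ofReal (‖f x‖ ^ 2) with hT2
    have hcoe2 : ∀ y, ENNReal.ofReal (‖f y‖ ^ 2) = ((‖f y‖₊ : ℝ≥0∞)) ^ 2 := fun y => by
      rw [ENNReal.ofReal_pow (norm_nonneg _), ofReal_norm, enorm_eq_nnnorm]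
    set S : Set ((Fin n → ℝ) × ℝ) := {p | 0 < p.2} with hSdef
    have hSm : MeasurableSet S := measurableSet_lt measurable_const measurable_snd
    set μ' := μ.restrict S with hμ'
    set F : (Fin n → ℝ) × ℝ → ℝ≥0∞ :=
      fun p => ENNReal.ofReal (‖∫ y, P p.2 p.1 y * f y‖ ^ 2) with hF
    have hres : (∫⁻ p, F p ∂μ) = ∫⁻ p, F p ∂μ' := by
      rw [← lintegral_add_compl F hSm (μ := μ)]
      have hc : μ Sᶜ = 0 := by
        have hset : Sᶜ = {p : (Fin n → ℝ) × ℝ | p.2 ≤ 0} := by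
          ext p; simp [hSdef, not_lt]
        rw [hset]; exact hnull
      rw [setLIntegral_measure_zero _ _ hc, add_zero]
    set I : (Fin n → ℝ) × ℝ → ℝ≥0∞ :=
      fun p => ∫⁻ y in Metric.closedBall p.1 p.2, ((‖f y‖₊ : ℝ≥0∞)) with hI
    have hIeq : ∀ p : (Fin n → ℝ) × ℝ,
        I p = ∫⁻ y, (if dist y p.1 ≤ p.2 then ((‖f y‖₊ : ℝ≥0∞)) else 0) := by
      intro p
      rw [show I p = ∫⁻ y in Metric.closedBall p.1 p.2, ((‖f y‖₊ : ℝ≥0∞)) from rfl,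
        ← lintegral_indicator Metric.isClosed_closedBall.measurableSet]
      refine lintegral_congr fun y => ?_
      by_cases hy : dist y p.1 ≤ p.2
      · rw [Set.indicator_of_mem (Metric.mem_closedBall.2 hy), if_pos hy]
      · rw [Set.indicator_of_notMem (fun hc => hy (Metric.mem_closedBall.1 hc)), if_neg hy]
    have hImeas : Measurable I := by
      have hjm : Measurable (fun q : ((Fin n → ℝ) × ℝ) × (Fin n → ℝ) =>
          (if dist q.2 q.1.1 ≤ q.1.2 then ((‖f q.2‖₊ : ℝ≥0∞)) else 0)) := by
        refine Measurable.ite ?_ ?_ measurable_const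
        · exact measurableSet_le
            (continuous_snd.dist (continuous_fst.fst)).measurable
            (continuous_fst.snd).measurable
        · exact ((hf.comp measurable_snd).nnnorm).coe_nnreal_ennreal
      have h2 : Measurable fun p : (Fin n → ℝ) × ℝ =>
          ∫⁻ y, (if dist y p.1 ≤ p.2 then ((‖f y‖₊ : ℝ≥0∞)) else 0) :=
        hjm.lintegral_prod_right'
      simpa only [← hIeq] using h2
    set D : ℝ → ℝ≥0∞ := fun t => ENNReal.ofReal ((2*t)^n) with hD
    have hDmeas : Measurable D :=
      ((measurable_const.mul measurable_id).pow_const n).ennreal_ofReal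
    have hDtop : ∀ t, D t ≠ ⊤ := fun t => ENNReal.ofReal_ne_top
    have hD0 : ∀ t : ℝ, 0 < t → D t ≠ 0 := by
      intro t ht
      simp only [hD, ne_eq, ENNReal.ofReal_eq_zero, not_le]
      positivity
    set Gr : (Fin n → ℝ) × ℝ → ℝ := fun p => (I p / D p.2).toReal with hGr
    have hGrmeas : Measurable Gr :=
      (hImeas.div (hDmeas.comp measurable_snd)).ennreal_toReal
    have hGrnn : ∀ p, 0 ≤ Gr p := fun p => ENNReal.toReal_nonneg
    have hIfin : ∀ p : (Fin n → ℝ) × ℝ, I p ≠ ⊤ := by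
      intro p
      have hb : I p ≤ volume (Metric.closedBall p.1 p.2) + T2 := by
        calc I p ≤ ∫⁻ y in Metric.closedBall p.1 p.2, (1 + ((‖f y‖₊ : ℝ≥0∞)) ^ 2) :=
              lintegral_mono fun y => ennreal_le_one_add_sq _
          _ = volume (Metric.closedBall p.1 p.2)
              + ∫⁻ y in Metric.closedBall p.1 p.2, ((‖f y‖₊ : ℝ≥0∞)) ^ 2 := by
              rw [lintegral_add_left measurable_const, lintegral_one,
                Measure.restrict_apply_univ]
          _ ≤ volume (Metric.closedBall p.1 p.2) + T2 := by
              refine add_le_add_right ?_ _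
              refine (setLIntegral_le_lintegral _ _).trans ?_
              rw [hT2]
              exact le_of_eq (by congr 1; funext y; rw [hcoe2])
      exact ne_top_of_le_ne_top
        (ENNReal.add_ne_top.2 ⟨measure_closedBall_lt_top.ne, hftop⟩) hb
    have hIdiv : ∀ p : (Fin n → ℝ) × ℝ, 0 < p.2 → I p / D p.2 = ENNReal.ofReal (Gr p) :=
      fun p ht => (ENNReal.ofReal_toReal (ENNReal.div_lt_top (hIfin p) (hD0 _ ht)).ne).symm
    -- pointwise kernel bound
    have hkey : ∀ p : (Fin n → ℝ) × ℝ, 0 < p.2 →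
        F p ≤ ENNReal.ofReal (4^n) * ENNReal.ofReal (Gr p ^ 2) := by
      intro p ht
      have hstep1 : ((‖∫ y, P p.2 p.1 y * f y‖₊ : ℝ≥0∞)) ≤ ENNReal.ofReal ((p.2^n)⁻¹) * I p := by
        calc ((‖∫ y, P p.2 p.1 y * f y‖₊ : ℝ≥0∞))
            ≤ ∫⁻ y, ((‖P p.2 p.1 y * f y‖₊ : ℝ≥0∞)) :=
            enorm_integral_le_lintegral_enorm _
          _ ≤ ∫⁻ y, (if dist y p.1 ≤ p.2
                then ENNReal.ofReal ((p.2^n)⁻¹) * ((‖f y‖₊ : ℝ≥0∞)) else 0) := by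
              refine lintegral_mono fun y => ?_
              by_cases hy : dist y p.1 ≤ p.2
              · simp only [hy, if_true]
                rw [nnnorm_mul, ENNReal.coe_mul]
                refine mul_le_mul_left ?_ _
                rw [← enorm_eq_nnnorm, ← ofReal_norm]
                exact ENNReal.ofReal_le_ofReal (hPbound p.2 p.1 y ht)
              · have hz : P p.2 p.1 y = 0 := by
                  refine hPsupp p.2 p.1 y ht ?_
                  rw [dist_comm]
                  exact not_le.1 hy
                simp [hy, hz]
          _ = ENNReal.ofReal ((p.2^n)⁻¹) * I p := by
              rw [hIeq, ← lintegral_const_mul _ (by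
                refine Measurable.ite ?_ ?_ measurable_const
                · exact measurableSet_le
                    (continuous_id.dist continuous_const).measurable measurable_const
                · exact hf.nnnorm.coe_nnreal_ennreal)]
              congr 1; funext y
              by_cases hy : dist y p.1 ≤ p.2 <;> simp [hy]
      have h2n0 : ENNReal.ofReal ((2:ℝ)^n) ≠ 0 := by
        simp only [ne_eq, ENNReal.ofReal_eq_zero, not_le]; positivity
      have hstep2 : ENNReal.ofReal ((p.2^n)⁻¹) * I p
          = ENNReal.ofReal ((2:ℝ)^n) * (I p / D p.2) := by
        have hDfact : D p.2 = ENNReal.ofReal ((2:ℝ)^n) * ENNReal.ofReal (p.2^n) := by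
          show ENNReal.ofReal ((2*p.2)^n) = _
          rw [← ENNReal.ofReal_mul (by positivity)]
          congr 1
          rw [mul_pow]
        rw [div_eq_mul_inv, hDfact,
          ENNReal.mul_inv (Or.inl h2n0) (Or.inl ENNReal.ofReal_ne_top),
          ENNReal.ofReal_inv_of_pos (pow_pos ht n)]
        rw [show ENNReal.ofReal ((2:ℝ)^n) * (I p * ((ENNReal.ofReal ((2:ℝ)^n))⁻¹
            * (ENNReal.ofReal (p.2^n))⁻¹))
          = (ENNReal.ofReal ((2:ℝ)^n) * (ENNReal.ofReal ((2:ℝ)^n))⁻¹)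
            * ((ENNReal.ofReal (p.2^n))⁻¹ * I p) from by ring,
          ENNReal.mul_inv_cancel h2n0 ENNReal.ofReal_ne_top, one_mul]
      calc F p = ((‖∫ y, P p.2 p.1 y * f y‖₊ : ℝ≥0∞)) ^ 2 := by
            rw [show F p = ENNReal.ofReal (‖∫ y, P p.2 p.1 y * f y‖ ^ 2) from rfl,
              ENNReal.ofReal_pow (norm_nonneg _), ofReal_norm, enorm_eq_nnnorm]
        _ ≤ (ENNReal.ofReal ((p.2^n)⁻¹) * I p) ^ 2 := pow_le_pow_left' hstep1 2
        _ = (ENNReal.ofReal ((2:ℝ)^n)) ^ 2 * (I p / D p.2) ^ 2 := by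
            rw [hstep2, mul_pow]
        _ = ENNReal.ofReal (4^n) * ENNReal.ofReal (Gr p ^ 2) := by
            rw [hIdiv p ht, ← ENNReal.ofReal_pow (by positivity),
              ← ENNReal.ofReal_pow (hGrnn p)]
            congr 2
            rw [show (4:ℝ) = 2*2 by norm_num, mul_pow, sq]
    have hGr2meas : Measurable fun p => ENNReal.ofReal (Gr p ^ 2) :=
      (hGrmeas.pow_const 2).ennreal_ofReal
    have hmain1 : ∫⁻ p, F p ∂μ' ≤ ENNReal.ofReal (4^n) * ∫⁻ p, ENNReal.ofReal (Gr p ^ 2) ∂μ' := by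
      rw [← lintegral_const_mul _ hGr2meas]
      refine lintegral_mono_ae ?_
      filter_upwards [self_mem_ae_restrict hSm] with p hp using hkey p hp
    -- layer cake
    have hlc : ∫⁻ p, ENNReal.ofReal (Gr p ^ 2) ∂μ' =
        ∫⁻ t in Ioi (0:ℝ), μ' {a | t < Gr a} * ENNReal.ofReal (2*t) := by
      have h := lintegral_comp_eq_lintegral_meas_lt_mul μ' (f := Gr) (g := fun t => 2*t)
        (Filter.Eventually.of_forall hGrnn) hGrmeas.aemeasurable
        (fun t _ => (continuous_const.mul continuous_id).intervalIntegrable 0 t)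
        ((ae_restrict_iff' measurableSet_Ioi).2 (Filter.Eventually.of_forall
          (fun t ht => by have h0 := mem_Ioi.1 ht; show (0:ℝ) ≤ 2*t; linarith)))
      rw [← h]
      refine lintegral_congr fun p => ?_
      simp only [integral_two_mul_eq_sq]
    set gb : ℝ → (Fin n → ℝ) → ℝ≥0∞ := fun q y =>
      if ENNReal.ofReal (q/2) < ((‖f y‖₊ : ℝ≥0∞)) then ((‖f y‖₊ : ℝ≥0∞)) else 0 with hgb
    have hgbj : Measurable (fun q : ℝ × (Fin n → ℝ) => gb q.1 q.2) := by
      refine Measurable.ite ?_ ?_ measurable_const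
      · exact measurableSet_lt ((measurable_fst.div_const 2).ennreal_ofReal)
          ((hf.comp measurable_snd).nnnorm.coe_nnreal_ennreal)
      · exact (hf.comp measurable_snd).nnnorm.coe_nnreal_ennreal
    have hgbmeas : ∀ q, Measurable (gb q) := by
      intro q
      exact hgbj.comp (measurable_const.prodMk measurable_id)
    have hgbfin : ∀ q : ℝ, 0 < q → ∫⁻ y, gb q y ≠ ⊤ := by
      intro q hq
      have hc0 : ENNReal.ofReal (q/2) ≠ 0 := by
        simp only [ne_eq, ENNReal.ofReal_eq_zero, not_le]; positivity
      have hle : ∀ y, gb q y ≤ (ENNReal.ofReal (q/2))⁻¹ * ((‖f y‖₊ : ℝ≥0∞)) ^ 2 := by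
        intro y
        by_cases hy : ENNReal.ofReal (q/2) < ((‖f y‖₊ : ℝ≥0∞))
        · simp only [hgb, hy, if_true]
          calc ((‖f y‖₊ : ℝ≥0∞))
              = (ENNReal.ofReal (q/2))⁻¹ * (ENNReal.ofReal (q/2) * ((‖f y‖₊ : ℝ≥0∞))) := by
                rw [← mul_assoc, ENNReal.inv_mul_cancel hc0 ENNReal.ofReal_ne_top, one_mul]
            _ ≤ (ENNReal.ofReal (q/2))⁻¹ * (((‖f y‖₊ : ℝ≥0∞)) * ((‖f y‖₊ : ℝ≥0∞))) :=
                mul_le_mul_right (mul_le_mul_left hy.le _) _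
            _ = (ENNReal.ofReal (q/2))⁻¹ * ((‖f y‖₊ : ℝ≥0∞)) ^ 2 := by rw [sq]
        · simp [hgb, hy]
      have hb : ∫⁻ y, gb q y ≤ (ENNReal.ofReal (q/2))⁻¹ * T2 := by
        have heq : (ENNReal.ofReal (q/2))⁻¹ * T2
            = ∫⁻ y, (ENNReal.ofReal (q/2))⁻¹ * ((‖f y‖₊ : ℝ≥0∞)) ^ 2 := by
          rw [lintegral_const_mul _ ((hf.nnnorm.coe_nnreal_ennreal).pow_const 2)]
          congr 1
          rw [hT2]
          exact lintegral_congr fun y => by rw [hcoe2]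
        rw [heq]
        exact lintegral_mono hle
      exact ne_top_of_le_ne_top
        (ENNReal.mul_ne_top (ENNReal.inv_ne_top.2 hc0) hftop) hb
    have hweak : ∀ t : ℝ, 0 < t →
        μ' {a | t < Gr a} ≤ ENNReal.ofReal (3^n * Cc)
          * ((ENNReal.ofReal (t/2))⁻¹ * ∫⁻ y, gb t y) := by
      intro t htpos
      have hmt : MeasurableSet {a : (Fin n → ℝ) × ℝ | t < Gr a} :=
        measurableSet_lt measurable_const hGrmeas
      rw [hμ', Measure.restrict_apply hmt]
      have hsub : {a : (Fin n → ℝ) × ℝ | t < Gr a} ∩ S ⊆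
          {p : (Fin n → ℝ) × ℝ | 0 < p.2 ∧
            ENNReal.ofReal (t/2) * ENNReal.ofReal ((2*p.2)^n)
              < ∫⁻ y in Metric.closedBall p.1 p.2, gb t y} := by
        rintro p ⟨hpt, hpS⟩
        have ht2 : 0 < p.2 := hpS
        refine ⟨ht2, ?_⟩
        have hlt : ENNReal.ofReal t * D p.2 < I p := by
          have h1 : ENNReal.ofReal t < I p / D p.2 := by
            rw [hIdiv p ht2]
            exact (ENNReal.ofReal_lt_ofReal_iff_of_nonneg htpos.le).2 hpt
          exact (ENNReal.lt_div_iff_mul_lt (Or.inl (hD0 _ ht2))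
            (Or.inl (hDtop _))).1 h1
        have hsplit : I p ≤ ENNReal.ofReal (t/2) * D p.2
            + ∫⁻ y in Metric.closedBall p.1 p.2, gb t y := by
          have hpt_add : ∀ y, ((‖f y‖₊ : ℝ≥0∞)) ≤ ENNReal.ofReal (t/2) + gb t y := by
            intro y
            by_cases hy : ENNReal.ofReal (t/2) < ((‖f y‖₊ : ℝ≥0∞))
            · simp only [hgb, hy, if_true]
              exact le_add_self
            · simp only [hgb, hy, if_false, add_zero]
              exact not_lt.1 hy
          calc I p ≤ ∫⁻ y in Metric.closedBall p.1 p.2, (ENNReal.ofReal (t/2) + gb t y) :=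
                lintegral_mono fun y => hpt_add y
            _ = ENNReal.ofReal (t/2) * volume (Metric.closedBall p.1 p.2)
                + ∫⁻ y in Metric.closedBall p.1 p.2, gb t y := by
                rw [lintegral_add_left measurable_const, setLIntegral_const]
            _ = ENNReal.ofReal (t/2) * D p.2
                + ∫⁻ y in Metric.closedBall p.1 p.2, gb t y := by
                have hvol : volume (Metric.closedBall p.1 p.2) = D p.2 := by
                  rw [Real.volume_pi_closedBall _ ht2.le, Fintype.card_fin]
                rw [hvol]
        have hcne : ENNReal.ofReal (t/2) * D p.2 ≠ ⊤ :=
          ENNReal.mul_ne_top ENNReal.ofReal_ne_top (hDtop _)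
        have hsum : ENNReal.ofReal (t/2) * D p.2 + ENNReal.ofReal (t/2) * D p.2
            = ENNReal.ofReal t * D p.2 := by
          rw [← add_mul, ← ENNReal.ofReal_add (by linarith) (by linarith)]
          congr 2
          ring
        have hfin2 : ENNReal.ofReal (t/2) * D p.2 + ENNReal.ofReal (t/2) * D p.2
            < ENNReal.ofReal (t/2) * D p.2 + ∫⁻ y in Metric.closedBall p.1 p.2, gb t y := by
          rw [hsum]
          exact hlt.trans_le hsplit
        exact (ENNReal.add_lt_add_iff_left hcne).1 hfin2
      have hα0 : ENNReal.ofReal (t/2) ≠ 0 := by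
        simp only [ne_eq, ENNReal.ofReal_eq_zero, not_le]; positivity
      calc μ ({a : (Fin n → ℝ) × ℝ | t < Gr a} ∩ S)
          ≤ μ {p : (Fin n → ℝ) × ℝ | 0 < p.2 ∧
              ENNReal.ofReal (t/2) * ENNReal.ofReal ((2*p.2)^n)
                < ∫⁻ y in Metric.closedBall p.1 p.2, gb t y} := measure_mono hsub
        _ ≤ ENNReal.ofReal (3^n * Cc) * ((ENNReal.ofReal (t/2))⁻¹ * ∫⁻ y, gb t y) :=
            weak_bound n μ Cc hCc hCar (gb t) (hgbmeas t) (hgbfin t htpos)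
              (ENNReal.ofReal (t/2)) hα0 ENNReal.ofReal_ne_top
    have hIntMeas : Measurable fun t : ℝ => ∫⁻ y, gb t y :=
      hgbj.lintegral_prod_right'
    have hint : ∫⁻ t in Ioi (0:ℝ), μ' {a | t < Gr a} * ENNReal.ofReal (2*t)
        ≤ ENNReal.ofReal (3^n*Cc) * 4 * ∫⁻ t in Ioi (0:ℝ), ∫⁻ y, gb t y := by
      rw [← lintegral_const_mul _ hIntMeas]
      refine lintegral_mono_ae ?_
      filter_upwards [self_mem_ae_restrict measurableSet_Ioi] with t ht
      have htpos : (0:ℝ) < t := ht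
      have hc0 : ENNReal.ofReal (t/2) ≠ 0 := by
        simp only [ne_eq, ENNReal.ofReal_eq_zero, not_le]; positivity
      calc μ' {a | t < Gr a} * ENNReal.ofReal (2*t)
          ≤ (ENNReal.ofReal (3^n*Cc) * ((ENNReal.ofReal (t/2))⁻¹ * ∫⁻ y, gb t y))
            * ENNReal.ofReal (2*t) := mul_le_mul_left (hweak t htpos) _
        _ = ENNReal.ofReal (3^n*Cc) * 4 * ∫⁻ y, gb t y := by
            have h4 : ENNReal.ofReal (2*t) = ENNReal.ofReal (t/2) * 4 := by
              rw [show (2:ℝ)*t = (t/2)*4 by ring, ENNReal.ofReal_mul (by linarith)]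
              norm_num
            rw [h4, show ENNReal.ofReal (3^n*Cc) * ((ENNReal.ofReal (t/2))⁻¹ * ∫⁻ y, gb t y)
                * (ENNReal.ofReal (t/2) * 4)
              = ENNReal.ofReal (3^n*Cc) * 4 * (∫⁻ y, gb t y)
                * ((ENNReal.ofReal (t/2))⁻¹ * ENNReal.ofReal (t/2)) from by ring,
              ENNReal.inv_mul_cancel hc0 ENNReal.ofReal_ne_top, mul_one]
    have hswap : ∫⁻ t in Ioi (0:ℝ), ∫⁻ y, gb t y = 2 * T2 := by
      rw [lintegral_lintegral_swap hgbj.aemeasurable]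
      have hinner : ∀ y, (∫⁻ t in Ioi (0:ℝ), gb t y) = 2 * ((‖f y‖₊ : ℝ≥0∞)) ^ 2 := by
        intro y
        have hA : MeasurableSet {q : ℝ | ENNReal.ofReal (q/2) < ((‖f y‖₊ : ℝ≥0∞))} :=
          measurableSet_lt ((measurable_id.div_const 2).ennreal_ofReal) measurable_const
        have hset : {q : ℝ | ENNReal.ofReal (q/2) < ((‖f y‖₊ : ℝ≥0∞))} ∩ Ioi 0
            = Ioo 0 (2*‖f y‖) := by
          ext q
          simp only [mem_inter_iff, mem_setOf_eq, mem_Ioi, mem_Ioo]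
          constructor
          · rintro ⟨h1, h2⟩
            refine ⟨h2, ?_⟩
            rw [← enorm_eq_nnnorm, ← ofReal_norm,
              ENNReal.ofReal_lt_ofReal_iff_of_nonneg (by linarith)] at h1
            linarith
          · rintro ⟨h1, h2⟩
            refine ⟨?_, h1⟩
            rw [← enorm_eq_nnnorm, ← ofReal_norm,
              ENNReal.ofReal_lt_ofReal_iff_of_nonneg (by linarith)]
            linarith
        calc (∫⁻ t in Ioi (0:ℝ), gb t y)
            = ∫⁻ t in Ioi (0:ℝ), {q : ℝ | ENNReal.ofReal (q/2)
                < ((‖f y‖₊ : ℝ≥0∞))}.indicator (fun _ => ((‖f y‖₊ : ℝ≥0∞))) t := by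
              refine lintegral_congr fun t => ?_
              rw [Set.indicator_apply]
              simp only [hgb, mem_setOf_eq]
          _ = ((‖f y‖₊ : ℝ≥0∞)) * volume ({q : ℝ | ENNReal.ofReal (q/2)
                < ((‖f y‖₊ : ℝ≥0∞))} ∩ Ioi 0) := by
              rw [lintegral_indicator hA, setLIntegral_const, Measure.restrict_apply hA]
          _ = ((‖f y‖₊ : ℝ≥0∞)) * ENNReal.ofReal (2*‖f y‖) := by
              rw [hset, Real.volume_Ioo, sub_zero]
          _ = 2 * ((‖f y‖₊ : ℝ≥0∞)) ^ 2 := by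
              rw [ENNReal.ofReal_mul (by norm_num), ofReal_norm, enorm_eq_nnnorm]
              norm_num
              ring
      rw [lintegral_congr hinner,
        lintegral_const_mul _ ((hf.nnnorm.coe_nnreal_ennreal).pow_const 2)]
      congr 1
      rw [hT2]
      exact lintegral_congr fun y => (hcoe2 y).symm
    -- final assembly
    calc ∫⁻ p, F p ∂μ = ∫⁻ p, F p ∂μ' := hres
      _ ≤ ENNReal.ofReal (4^n) * ∫⁻ p, ENNReal.ofReal (Gr p ^ 2) ∂μ' := hmain1
      _ = ENNReal.ofReal (4^n) * ∫⁻ t in Ioi (0:ℝ), μ' {a | t < Gr a} * ENNReal.ofReal (2*t) := by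
          rw [hlc]
      _ ≤ ENNReal.ofReal (4^n) * (ENNReal.ofReal (3^n*Cc) * 4
            * ∫⁻ t in Ioi (0:ℝ), ∫⁻ y, gb t y) := mul_le_mul_right hint _
      _ = ENNReal.ofReal (4^n) * (ENNReal.ofReal (3^n*Cc) * 4 * (2 * T2)) := by rw [hswap]
      _ = (ENNReal.ofReal (4^n) * ENNReal.ofReal (3^n*Cc) * 8) * T2 := by ring
      _ ≤ ENNReal.ofReal ((8 * 12 ^ n + 1) * Cc) * T2 := by
          refine mul_le_mul_left ?_ _
          rw [show (8:ℝ≥0∞) = ENNReal.ofReal 8 by norm_num,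
            ← ENNReal.ofReal_mul (by positivity), ← ENNReal.ofReal_mul (by positivity)]
          refine ENNReal.ofReal_le_ofReal ?_
          have h12 : (4:ℝ)^n * (3^n) = 12^n := by
            rw [← mul_pow]; norm_num
          have h12nn : (0:ℝ) ≤ 12^n := by positivity
          calc (4:ℝ)^n * (3^n*Cc) * 8 = 8 * 12^n * Cc := by rw [mul_comm ((4:ℝ)^n) _]; ring_nf; nlinarith [h12]
            _ ≤ (8 * 12 ^ n + 1) * Cc := by nlinarith
end
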